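/- arXiv:2211.02838 — 9 statements merged into one kernel-verified Lean document; each statement's English description precedes it below -/
import Mathlib

section
/- For every integer ℓ ≥ 4 and every positive integer n divisible by 3ℓ−1, there exists a 𝒦_{ℓ+1}^3-saturated 3-graph H on n vertices with δ₂⁺(H) = ((3ℓ−7)/(3ℓ−1))·n such that H is (ℓ+1)-partite but not ℓ-partite. -/
open Finset

/-- `H` contains a member of the family `𝒦_{ℓ+1}^r` as a subgraph, i.e. there is an
`(ℓ+1)`-set of vertices every pair of which is covered by an edge of `H`. -/
def ContainsKFam {V : Type*} (H : Finset (Finset V)) (ℓ : ℕ) : Prop :=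
  ∃ S : Finset V, S.card = ℓ + 1 ∧
    ∀ u ∈ S, ∀ v ∈ S, u ≠ v → ∃ e ∈ H, u ∈ e ∧ v ∈ e

/-- `H` is `𝒦_{ℓ+1}^r`-free. -/
def KFamFree {V : Type*} (H : Finset (Finset V)) (ℓ : ℕ) : Prop := ¬ ContainsKFam H ℓ

/-- `H` is `𝒦_{ℓ+1}^r`-saturated: it is `𝒦_{ℓ+1}^r`-free, but adding any new `r`-set as an
edge creates a member of `𝒦_{ℓ+1}^r`. -/
def KFamSaturated {V : Type*} [DecidableEq V] (H : Finset (Finset V)) (r ℓ : ℕ) : Prop :=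
  KFamFree H ℓ ∧ ∀ e : Finset V, e.card = r → e ∉ H → ContainsKFam (insert e H) ℓ

/-- The minimum positive co-degree `δ₂⁺(H)` of a 3-graph `H`: the maximum `k` such that
every pair of distinct vertices contained in at least one edge of `H` is contained in at
least `k` edges of `H`. -/
noncomputable def minPosCodeg {n : ℕ} (H : Finset (Finset (Fin n))) : ℕ :=
  sSup {k | ∀ u v : Fin n, u ≠ v → (∃ e ∈ H, u ∈ e ∧ v ∈ e) →
    k ≤ (H.filter fun e => u ∈ e ∧ v ∈ e).card}


namespace PCT

/-- adjacency in the 5-cycle on `{0,1,2,3,4}` -/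
def cyc (s t : ℕ) : Prop := t = s+1 ∨ s = t+1 ∨ (s = 0 ∧ t = 4) ∨ (s = 4 ∧ t = 0)

instance (s t : ℕ) : Decidable (cyc s t) := by unfold cyc; infer_instance

/-- label of vertex `v`: parts `0..p-1` of size `3m`, parts `p..p+4` of size `m`. -/
def lab (m p v : ℕ) : ℕ := if v < 3*m*p then v / (3*m) else p + (v - 3*m*p)/m

/-- start index of part `k` -/
def lo (m p k : ℕ) : ℕ := 3*m*(min k p) + (k - p)*m

/-- adjacency of labels -/
def adjL (p i j : ℕ) : Prop := i ≠ j ∧ (p ≤ i → p ≤ j → cyc (i-p) (j-p))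

instance (p i j : ℕ) : Decidable (adjL p i j) := by unfold adjL; infer_instance

lemma adjL_symm {p i j : ℕ} (h : adjL p i j) : adjL p j i := by
  obtain ⟨h1, h2⟩ := h
  exact ⟨h1.symm, fun a b => by have := h2 b a; unfold cyc at *; omega⟩

/-- the 3-graph -/
def Hs (n m p : ℕ) : Finset (Finset (Fin n)) :=
  (Finset.univ.powersetCard 3).filter
    fun e => ∀ u ∈ e, ∀ v ∈ e, u ≠ v → adjL p (lab m p u.val) (lab m p v.val)

lemma mem_Hs {n m p : ℕ} {e : Finset (Fin n)} :
    e ∈ Hs n m p ↔ e.card = 3 ∧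
      ∀ u ∈ e, ∀ v ∈ e, u ≠ v → adjL p (lab m p u.val) (lab m p v.val) := by
  simp [Hs, Finset.mem_powersetCard_univ, and_comm]

section basics
variable {m p : ℕ}

lemma lo_succ_P {k : ℕ} (hk : k < p) : lo m p (k+1) = lo m p k + 3*m := by
  unfold lo
  rw [min_eq_left hk.le, min_eq_left (by omega : k+1 ≤ p)]
  have h1 : 3*m*(k+1) = 3*m*k + 3*m := by ring
  have h2 : (k-p)*m = 0 := by
    have : k - p = 0 := by omega
    simp [this]
  have h3 : (k+1-p)*m = 0 := by
    have : k+1-p = 0 := by omega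
    simp [this]
  omega

lemma lo_succ_A {k : ℕ} (hk : p ≤ k) : lo m p (k+1) = lo m p k + m := by
  unfold lo
  rw [min_eq_right hk, min_eq_right (by omega : p ≤ k+1)]
  have h1 : k+1-p = (k-p)+1 := by omega
  rw [h1]
  have h2 : ((k-p)+1)*m = (k-p)*m + m := by ring
  omega

lemma lo_zero : lo m p 0 = 0 := by simp [lo]

lemma lo_P {k : ℕ} (hk : k ≤ p) : lo m p k = 3*m*k := by
  have h2 : (k-p)*m = 0 := by
    have : k - p = 0 := by omega
    simp [this]
  unfold lo; rw [min_eq_left hk]; omega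

lemma lo_A {k : ℕ} (hk : p ≤ k) : lo m p k = 3*m*p + (k-p)*m := by
  unfold lo; rw [min_eq_right hk]

lemma lo_top : lo m p (p+5) = 3*m*p + 5*m := by
  rw [lo_A (by omega)]
  have : p+5-p = 5 := by omega
  rw [this]

lemma lo_strict_mono (hm : 0 < m) {a b : ℕ} (h : a < b) : lo m p a < lo m p b := by
  induction b with
  | zero => omega
  | succ b ih =>
    have hle : lo m p a ≤ lo m p b := by
      rcases Nat.lt_or_ge a b with h' | h'
      · exact (ih h').le
      · have : a = b := by omega
        rw [this]
    rcases Nat.lt_or_ge b p with hb | hb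
    · rw [lo_succ_P hb]; omega
    · rw [lo_succ_A hb]; omega

lemma lab_eq_iff (hm : 0 < m) {v k : ℕ} (hv : v < 3*m*p + 5*m) (hk : k < p + 5) :
    lab m p v = k ↔ lo m p k ≤ v ∧ v < lo m p (k+1) := by
  have h3m : 0 < 3*m := by omega
  unfold lab
  split_ifs with h
  · -- v in the P region
    rcases Nat.lt_or_ge k p with hkp | hkp
    · rw [lo_P hkp.le, lo_P hkp]
      constructor
      · rintro rfl
        have e1 : 3*m*(v/(3*m)) = v/(3*m)*(3*m) := by ring
        have e2 : v < 3*m*(v/(3*m)+1) := Nat.lt_mul_div_succ v h3m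
        have e3 : 3*m*(v/(3*m)+1) = 3*m*(v/(3*m)) + 3*m := by ring
        have e4 : v/(3*m)*(3*m) ≤ v := Nat.div_mul_le_self v (3*m)
        refine ⟨by omega, ?_⟩
        have e5 : 3*m*(v/(3*m)+1) = (v/(3*m)+1)*(3*m) := by ring
        calc v < 3*m*(v/(3*m)+1) := e2
        _ = 3*m*(v/(3*m)+1) := rfl
      · rintro ⟨h1, h2⟩
        apply Nat.div_eq_of_lt_le
        · calc k*(3*m) = 3*m*k := by ring
          _ ≤ v := h1
        · calc v < 3*m*(k+1) := h2
          _ = (k+1)*(3*m) := by ring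
    · -- k ≥ p: impossible since v/(3m) < p ≤ k, and rhs impossible
      have hdiv : v / (3*m) < p := Nat.div_lt_of_lt_mul (by omega)
      have hlok : 3*m*p ≤ lo m p k := by
        rw [lo_A hkp]; omega
      constructor
      · omega
      · rintro ⟨h1, _⟩; omega
  · -- v in A region
    push_neg at h
    rcases Nat.lt_or_ge k p with hkp | hkp
    · have hle : 3*m*(k+1) ≤ 3*m*p := Nat.mul_le_mul_left _ (by omega)
      constructor
      · intro hE; exfalso
        have : p ≤ p + (v-3*m*p)/m := Nat.le_add_right _ _
        omega
      · rintro ⟨_, h2⟩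
        rw [lo_P (by omega : k+1 ≤ p)] at h2
        omega
    · rw [lo_A hkp, lo_A (by omega : p ≤ k+1)]
      have e1 : ((v-3*m*p)/m)*m ≤ v - 3*m*p := Nat.div_mul_le_self _ _
      have e2 : v - 3*m*p < m*((v-3*m*p)/m + 1) := Nat.lt_mul_div_succ _ hm
      have e3 : m*((v-3*m*p)/m + 1) = ((v-3*m*p)/m)*m + m := by ring
      have e4 : k+1-p = (k-p)+1 := by omega
      rw [e4]
      have e5 : ((k-p)+1)*m = (k-p)*m + m := by ring
      constructor
      · intro hE
        have hq : (v - 3*m*p)/m = k - p := by omega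
        rw [hq] at e1 e2 e3
        omega
      · rintro ⟨h1, h2⟩
        have hq : (v - 3*m*p)/m = k - p := by
          apply Nat.div_eq_of_lt_le
          · omega
          · have : ((k-p)+1)*m = (k-p)*m + m := by ring
            omega
        omega

lemma lab_lt (hm : 0 < m) {v : ℕ} (hv : v < 3*m*p + 5*m) : lab m p v < p + 5 := by
  unfold lab
  split_ifs with h
  · have : v / (3*m) < p := Nat.div_lt_of_lt_mul (by omega)
    omega
  · push_neg at h
    have : (v - 3*m*p)/m < 5 := Nat.div_lt_of_lt_mul (by omega)
    omega

lemma lo_lt_n (hm : 0 < m) {k : ℕ} (hk : k < p+5) : lo m p k < 3*m*p + 5*m := by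
  have := lo_strict_mono (m := m) (p := p) hm hk
  rwa [lo_top] at this

lemma lab_lo (hm : 0 < m) {k : ℕ} (hk : k < p+5) : lab m p (lo m p k) = k := by
  rw [lab_eq_iff hm (lo_lt_n hm hk) hk]
  exact ⟨le_refl _, lo_strict_mono hm (by omega)⟩

end basics

end PCT
namespace PCT
open Finset

lemma card_Ico_fin {n a b : ℕ} (hb : b ≤ n) :
    (univ.filter fun w : Fin n => a ≤ w.val ∧ w.val < b).card = b - a := by
  rw [← Nat.card_Ico a b]
  apply Finset.card_bij (fun w _ => w.val)
  · intro w hw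
    simp only [mem_filter, mem_univ, true_and] at hw
    simpa only [Finset.mem_Ico] using hw
  · intro w1 h1 w2 h2 h
    exact Fin.val_injective h
  · intro c hc
    simp only [Finset.mem_Ico] at hc
    refine ⟨⟨c, by omega⟩, ?_, rfl⟩
    simp only [mem_filter, mem_univ, true_and]
    exact hc

variable {n m p : ℕ}

lemma class_card (hm : 0 < m) (hn : n = 3*m*p + 5*m) {k : ℕ} (hk : k < p+5) :
    (univ.filter fun w : Fin n => lab m p w.val = k).card
      = lo m p (k+1) - lo m p k := by
  have h1 : (univ.filter fun w : Fin n => lab m p w.val = k)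
      = univ.filter fun w : Fin n => lo m p k ≤ w.val ∧ w.val < lo m p (k+1) := by
    apply Finset.filter_congr
    intro w _
    have hw : w.val < 3*m*p + 5*m := by omega
    first
    | exact lab_eq_iff hm hw hk
    | exact propext (lab_eq_iff hm hw hk)
  rw [h1, card_Ico_fin (by have := lo_lt_n (m:=m) (p:=p) hm (k := k+1); rcases Nat.lt_or_ge (k+1) (p+5) with h|h; · omega
                           · have : k + 1 = p + 5 := by omega
                             rw [this, lo_top]; omega)]

lemma class_card_P (hm : 0 < m) (hn : n = 3*m*p + 5*m) {k : ℕ} (hk : k < p) :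
    (univ.filter fun w : Fin n => lab m p w.val = k).card = 3*m := by
  rw [class_card hm hn (by omega), lo_succ_P hk]
  omega

lemma class_card_A (hm : 0 < m) (hn : n = 3*m*p + 5*m) {k : ℕ} (hk1 : p ≤ k)
    (hk2 : k < p+5) :
    (univ.filter fun w : Fin n => lab m p w.val = k).card = m := by
  rw [class_card hm hn hk2, lo_succ_A hk1]
  omega

/-- the count of vertices NOT label-adjacent to a given vertex is at most `3m`. -/
lemma card_nonadj (hm : 0 < m) (hn : n = 3*m*p + 5*m) (u : Fin n) :
    (univ.filter fun w : Fin n => ¬ adjL p (lab m p w.val) (lab m p u.val)).card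
      ≤ 3*m := by
  set i := lab m p u.val with hi
  have hiu : i < p + 5 := lab_lt hm (by omega)
  have hlabw : ∀ w : Fin n, lab m p w.val < p + 5 := fun w => lab_lt hm (by omega)
  rcases Nat.lt_or_ge i p with hip | hip
  · -- only the class of i is non-adjacent
    have hsub : (univ.filter fun w : Fin n => ¬ adjL p (lab m p w.val) i)
        ⊆ univ.filter fun w : Fin n => lab m p w.val = i := by
      intro w hw
      simp only [mem_filter, mem_univ, true_and] at hw ⊢
      by_contra hne
      exact hw ⟨hne, fun _ h2 => by omega⟩
    calc _ ≤ (univ.filter fun w : Fin n => lab m p w.val = i).card :=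
          Finset.card_le_card hsub
    _ = 3*m := class_card_P hm hn hip
  · -- i is an A-label
    set b1 := p + ((i - p) + 2) % 5 with hb1
    set b2 := p + ((i - p) + 3) % 5 with hb2
    have key : ∀ t, t < p + 5 → ¬ adjL p t i → t = i ∨ t = b1 ∨ t = b2 := by
      intro t ht hna
      rcases Nat.lt_or_ge t p with htp | htp
      · exfalso
        exact hna ⟨by omega, fun h1 _ => by omega⟩
      · by_contra hcon
        push_neg at hcon
        apply hna
        refine ⟨hcon.1, fun _ _ => ?_⟩
        have h5t : t - p < 5 := by omega
        have h5i : i - p < 5 := by omega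
        have hone : ∀ a, a < 5 → ∀ s, s < 5 → a ≠ s → a ≠ (s+2)%5 → a ≠ (s+3)%5 →
            cyc a s := by decide
        apply hone _ h5t _ h5i (by omega) (by omega) (by omega)
    have hsub : (univ.filter fun w : Fin n => ¬ adjL p (lab m p w.val) i)
        ⊆ (univ.filter fun w : Fin n => lab m p w.val = i)
          ∪ ((univ.filter fun w : Fin n => lab m p w.val = b1)
          ∪ (univ.filter fun w : Fin n => lab m p w.val = b2)) := by
      intro w hw
      simp only [mem_filter, mem_univ, true_and, Finset.mem_union] at hw ⊢
      exact key _ (hlabw w) hw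
    calc _ ≤ _ := Finset.card_le_card hsub
    _ ≤ _ + _ := Finset.card_union_le _ _
    _ ≤ _ := by
        have c1 : (univ.filter fun w : Fin n => lab m p w.val = i).card = m :=
          class_card_A hm hn hip hiu
        have c2 : (univ.filter fun w : Fin n => lab m p w.val = b1).card = m :=
          class_card_A hm hn (by omega) (by have := Nat.mod_lt ((i-p)+2) (y := 5) (by omega); omega)
        have c3 : (univ.filter fun w : Fin n => lab m p w.val = b2).card = m :=
          class_card_A hm hn (by omega) (by have := Nat.mod_lt ((i-p)+3) (y := 5) (by omega); omega)
        have := Finset.card_union_le (univ.filter fun w : Fin n => lab m p w.val = b1)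
          (univ.filter fun w : Fin n => lab m p w.val = b2)
        omega

/-- step lemma: find a label adjacent to two adjacent labels -/
lemma exists_mid (hp : 2 ≤ p) {i j : ℕ} (hi : i < p+5) (hj : j < p+5)
    (hadj : adjL p i j) : ∃ κ, κ < p+5 ∧ κ ≠ i ∧ κ ≠ j ∧ adjL p κ i ∧ adjL p κ j := by
  rcases Nat.lt_or_ge i p with hip | hip <;> rcases Nat.lt_or_ge j p with hjp | hjp
  · -- both P labels: use A label p
    exact ⟨p, by omega, by omega, by omega,
      ⟨by omega, fun _ h => by omega⟩, ⟨by omega, fun _ h => by omega⟩⟩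
  · -- i in P, j in A : use a P label different from i
    refine ⟨if i = 0 then 1 else 0, ?_, ?_, ?_, ?_, ?_⟩
    · split_ifs <;> omega
    · split_ifs <;> omega
    · split_ifs <;> omega
    · exact ⟨by split_ifs <;> omega, fun h _ => by split_ifs at h <;> omega⟩
    · exact ⟨by split_ifs <;> omega, fun h _ => by split_ifs at h <;> omega⟩
  · -- j in P, i in A
    refine ⟨if j = 0 then 1 else 0, ?_, ?_, ?_, ?_, ?_⟩
    · split_ifs <;> omega
    · split_ifs <;> omega
    · split_ifs <;> omega
    · exact ⟨by split_ifs <;> omega, fun h _ => by split_ifs at h <;> omega⟩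
    · exact ⟨by split_ifs <;> omega, fun h _ => by split_ifs at h <;> omega⟩
  · -- both A labels: use 0
    exact ⟨0, by omega, by omega, by omega,
      ⟨by omega, fun h _ => by omega⟩, ⟨by omega, fun h _ => by omega⟩⟩

/-- every adjacent pair lies in an edge of `Hs` -/
lemma covered_of_adj (hm : 0 < m) (hp : 2 ≤ p) (hn : n = 3*m*p + 5*m)
    {u v : Fin n} (h : adjL p (lab m p u.val) (lab m p v.val)) :
    ∃ e ∈ Hs n m p, u ∈ e ∧ v ∈ e := by
  obtain ⟨κ, hκ5, hκi, hκj, ha1, ha2⟩ :=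
    exists_mid hp (lab_lt hm (by omega)) (lab_lt hm (by omega)) h
  set w : Fin n := ⟨lo m p κ, by rw [hn]; exact lo_lt_n hm hκ5⟩ with hwdef
  have hlw : lab m p w.val = κ := lab_lo hm hκ5
  have hwu : w ≠ u := fun hC => hκi (by rw [← hlw, hC])
  have hwv : w ≠ v := fun hC => hκj (by rw [← hlw, hC])
  have huv : u ≠ v := fun hC => h.1 (by rw [hC])
  refine ⟨insert u (insert v {w}), ?_, by simp, by simp⟩
  rw [mem_Hs]
  constructor
  · rw [Finset.card_insert_of_notMem (by simp [huv, hwu.symm]),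
      Finset.card_insert_of_notMem (by simp [hwv.symm])]
    simp
  · intro a ha b hb hab
    simp only [Finset.mem_insert, Finset.mem_singleton] at ha hb
    rcases ha with rfl | rfl | rfl <;> rcases hb with rfl | rfl | rfl <;>
      first
      | exact absurd rfl hab
      | exact h
      | exact adjL_symm h
      | (rw [hlw]; first | exact ha1 | exact ha2 | exact adjL_symm ha1 | exact adjL_symm ha2)

end PCT
namespace PCT
open Finset

variable {n m p : ℕ}

/-- common neighbourhood -/
def Wset (n m p : ℕ) (u v : Fin n) : Finset (Fin n) :=
  univ.filter fun w => adjL p (lab m p w.val) (lab m p u.val) ∧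
    adjL p (lab m p w.val) (lab m p v.val)

lemma third_vertex {e : Finset (Fin n)} (he : e.card = 3) {u v : Fin n}
    (hu : u ∈ e) (hv : v ∈ e) (huv : u ≠ v) :
    ∃ w, w ≠ u ∧ w ≠ v ∧ e = insert u (insert v {w}) := by
  classical
  have hsub : {u, v} ⊆ e := by
    intro x hx; simp only [Finset.mem_insert, Finset.mem_singleton] at hx
    rcases hx with rfl | rfl <;> assumption
  have hc2 : ({u, v} : Finset (Fin n)).card = 2 := by
    rw [Finset.card_insert_of_notMem (by simp [huv]), Finset.card_singleton]
  have hcd : (e \ {u, v}).card = 1 := by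
    rw [Finset.card_sdiff_of_subset hsub, he, hc2]
  obtain ⟨w, hw⟩ := Finset.card_eq_one.mp hcd
  have hwmem : w ∈ e \ {u, v} := by rw [hw]; simp
  simp only [Finset.mem_sdiff, Finset.mem_insert, Finset.mem_singleton] at hwmem
  push_neg at hwmem
  refine ⟨w, hwmem.2.1, hwmem.2.2, ?_⟩
  have hset : insert u (insert v ({w} : Finset (Fin n))) ⊆ e := by
    intro x hx
    simp only [Finset.mem_insert, Finset.mem_singleton] at hx
    rcases hx with rfl | rfl | rfl
    · exact hu
    · exact hv
    · exact hwmem.1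
  have hcard : (insert u (insert v ({w} : Finset (Fin n)))).card = 3 := by
    rw [Finset.card_insert_of_notMem, Finset.card_insert_of_notMem, Finset.card_singleton]
    · simp only [Finset.mem_singleton]
      exact fun h => hwmem.2.2 h.symm
    · simp only [Finset.mem_insert, Finset.mem_singleton]
      push_neg
      exact ⟨huv, fun h => hwmem.2.1 h.symm⟩
  exact (Finset.eq_of_subset_of_card_le hset (by rw [he, hcard])).symm

lemma codeg_eq_Wset (hm : 0 < m) (hn : n = 3*m*p + 5*m)
    {u v : Fin n} (huv : adjL p (lab m p u.val) (lab m p v.val)) :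
    ((Hs n m p).filter fun e => u ∈ e ∧ v ∈ e).card = (Wset n m p u v).card := by
  have hune : u ≠ v := fun hC => huv.1 (by rw [hC])
  symm
  apply Finset.card_bij (fun w _ => insert u (insert v ({w} : Finset (Fin n))))
  · -- maps into the filter
    intro w hw
    simp only [Wset, mem_filter, mem_univ, true_and] at hw
    obtain ⟨hwu, hwv⟩ := hw
    have hwune : w ≠ u := fun hC => hwu.1 (by rw [hC])
    have hwvne : w ≠ v := fun hC => hwv.1 (by rw [hC])
    simp only [mem_filter]
    refine ⟨?_, by simp, by simp⟩
    rw [mem_Hs]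
    constructor
    · rw [Finset.card_insert_of_notMem (by simp only [Finset.mem_insert, Finset.mem_singleton]; push_neg; exact ⟨hune, fun h => hwune h.symm⟩),
        Finset.card_insert_of_notMem (by simp only [Finset.mem_singleton]; exact fun h => hwvne h.symm), Finset.card_singleton]
    · intro a ha b hb hab
      simp only [Finset.mem_insert, Finset.mem_singleton] at ha hb
      rcases ha with rfl | rfl | rfl <;> rcases hb with rfl | rfl | rfl <;>
        first
        | exact absurd rfl hab
        | exact huv
        | exact adjL_symm huv
        | exact hwu
        | exact hwv
        | exact adjL_symm hwu
        | exact adjL_symm hwv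
  · -- injective
    intro w1 h1 w2 h2 heq
    simp only [Wset, mem_filter, mem_univ, true_and] at h1 h2
    have hw1u : w1 ≠ u := fun hC => h1.1.1 (by rw [hC])
    have hw1v : w1 ≠ v := fun hC => h1.2.1 (by rw [hC])
    have : w1 ∈ insert u (insert v ({w2} : Finset (Fin n))) := by
      rw [← heq]; simp
    simp only [Finset.mem_insert, Finset.mem_singleton] at this
    tauto
  · -- surjective
    intro e he
    simp only [mem_filter] at he
    obtain ⟨heH, heu, hev⟩ := he
    rw [mem_Hs] at heH
    obtain ⟨hc3, hadj⟩ := heH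
    obtain ⟨w, hwu, hwv, hew⟩ := third_vertex hc3 heu hev hune
    have hwe : w ∈ e := by rw [hew]; simp
    refine ⟨w, ?_, hew.symm⟩
    simp only [Wset, mem_filter, mem_univ, true_and]
    exact ⟨hadj w hwe u heu hwu, hadj w hwe v hev hwv⟩

lemma Wset_card_ge (hm : 0 < m) (hn : n = 3*m*p + 5*m) (u v : Fin n) :
    3*m*p + 5*m - 6*m ≤ (Wset n m p u v).card := by
  classical
  have hcover : (univ : Finset (Fin n)) ⊆ Wset n m p u v
      ∪ ((univ.filter fun w : Fin n => ¬ adjL p (lab m p w.val) (lab m p u.val))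
      ∪ (univ.filter fun w : Fin n => ¬ adjL p (lab m p w.val) (lab m p v.val))) := by
    intro w _
    simp only [Wset, Finset.mem_union, mem_filter, mem_univ, true_and]
    tauto
  have h1 := Finset.card_le_card hcover
  rw [Finset.card_univ, Fintype.card_fin] at h1
  have h2 := Finset.card_union_le (Wset n m p u v)
    ((univ.filter fun w : Fin n => ¬ adjL p (lab m p w.val) (lab m p u.val))
      ∪ (univ.filter fun w : Fin n => ¬ adjL p (lab m p w.val) (lab m p v.val)))
  have h3 := Finset.card_union_le
    (univ.filter fun w : Fin n => ¬ adjL p (lab m p w.val) (lab m p u.val))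
    (univ.filter fun w : Fin n => ¬ adjL p (lab m p w.val) (lab m p v.val))
  have h4 := card_nonadj hm hn u
  have h5 := card_nonadj hm hn v
  omega

end PCT
namespace PCT
open Finset

variable {n m p : ℕ}

lemma adjL_of_lt_left {p i j : ℕ} (hi : i < p) (hne : i ≠ j) : adjL p i j :=
  ⟨hne, fun h _ => absurd h (by omega)⟩

lemma adjL_of_lt_right {p i j : ℕ} (hj : j < p) (hne : i ≠ j) : adjL p i j :=
  ⟨hne, fun _ h => absurd h (by omega)⟩

lemma adjL_of_cyc {p i j : ℕ} (hi : p ≤ i) (hj : p ≤ j) (hc : cyc (i-p) (j-p)) :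
    adjL p i j := ⟨by unfold cyc at hc; omega, fun _ _ => hc⟩

lemma lo_mono (hm : 0 < m) {a b : ℕ} (h : a ≤ b) : lo m p a ≤ lo m p b := by
  rcases Nat.eq_or_lt_of_le h with rfl | h'
  · exact le_refl _
  · exact (lo_strict_mono hm h').le

/-- vertices with labels `0` and `1` have co-degree exactly `n - 6m` -/
lemma Wset_card_special (hm : 0 < m) (hp : 2 ≤ p) (hn : n = 3*m*p + 5*m)
    (u v : Fin n) (hu : lab m p u.val = 0) (hv : lab m p v.val = 1) :
    (Wset n m p u v).card = 3*m*p + 5*m - 6*m := by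
  have key : ∀ w : Fin n,
      (adjL p (lab m p w.val) (lab m p u.val) ∧ adjL p (lab m p w.val) (lab m p v.val))
        ↔ (lo m p 2 ≤ w.val ∧ w.val < n) := by
    intro w
    rw [hu, hv]
    have hwlt : w.val < 3*m*p + 5*m := by omega
    have hlabw : lab m p w.val < p + 5 := lab_lt hm hwlt
    have hchar := (lab_eq_iff hm hwlt hlabw).mp rfl
    constructor
    · rintro ⟨h0, h1⟩
      have hne0 : lab m p w.val ≠ 0 := h0.1
      have hne1 : lab m p w.val ≠ 1 := h1.1
      have h2 : 2 ≤ lab m p w.val := by omega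
      exact ⟨(lo_mono hm h2).trans hchar.1, by omega⟩
    · rintro ⟨h2, _⟩
      have hge : 2 ≤ lab m p w.val := by
        by_contra hcon
        push_neg at hcon
        have : lo m p (lab m p w.val + 1) ≤ lo m p 2 := lo_mono hm (by omega)
        omega
      constructor
      · exact ⟨by omega, fun _ h => absurd h (by omega)⟩
      · exact ⟨by omega, fun _ h => absurd h (by omega)⟩
  have hWeq : Wset n m p u v
      = univ.filter fun w : Fin n => lo m p 2 ≤ w.val ∧ w.val < n := by
    apply Finset.filter_congr
    intro w _
    first
    | exact key w
    | exact propext (key w)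
  rw [hWeq, card_Ico_fin (le_refl n), lo_P hp]
  omega

/-- any nonadjacent pair has empty codegree? no - we need: `minPosCodeg` value -/
lemma minPosCodeg_Hs (hm : 0 < m) (hp : 2 ≤ p) (hn : n = 3*m*p + 5*m) :
    minPosCodeg (Hs n m p) = 3*m*p + 5*m - 6*m := by
  have hnpos : 0 < n := by omega
  set u : Fin n := ⟨lo m p 0, by rw [hn]; exact lo_lt_n hm (by omega)⟩ with hudef
  set v : Fin n := ⟨lo m p 1, by rw [hn]; exact lo_lt_n hm (by omega)⟩ with hvdef
  have hu : lab m p u.val = 0 := lab_lo hm (by omega)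
  have hv : lab m p v.val = 1 := lab_lo hm (by omega)
  have huv : u ≠ v := by
    intro hC
    rw [hC] at hu
    omega
  have hadj : adjL p (lab m p u.val) (lab m p v.val) := by
    rw [hu, hv]
    exact adjL_of_lt_left (by omega) (by omega)
  have hsetEq : {k | ∀ u' v' : Fin n, u' ≠ v' → (∃ e ∈ Hs n m p, u' ∈ e ∧ v' ∈ e) →
      k ≤ ((Hs n m p).filter fun e => u' ∈ e ∧ v' ∈ e).card}
      = Set.Iic (3*m*p + 5*m - 6*m) := by
    ext k
    simp only [Set.mem_setOf_eq, Set.mem_Iic]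
    constructor
    · intro hk
      have := hk u v huv (covered_of_adj hm hp hn hadj)
      rwa [codeg_eq_Wset hm hn hadj, Wset_card_special hm hp hn u v hu hv] at this
    · intro hk u' v' hne hcov
      obtain ⟨e, heH, hu', hv'⟩ := hcov
      have hadj' : adjL p (lab m p u'.val) (lab m p v'.val) :=
        (mem_Hs.mp heH).2 u' hu' v' hv' hne
      rw [codeg_eq_Wset hm hn hadj']
      calc k ≤ 3*m*p + 5*m - 6*m := hk
      _ ≤ _ := Wset_card_ge hm hn u' v'
  unfold minPosCodeg
  rw [hsetEq]
  exact csSup_Iic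

end PCT
namespace PCT
open Finset

variable {n m p : ℕ}

lemma free_Hs (hm : 0 < m) (hp : 2 ≤ p) (hn : n = 3*m*p + 5*m) :
    KFamFree (Hs n m p) (p+2) := by
  rintro ⟨S, hcard, hcov⟩
  -- all pairs in S are label-adjacent
  have hadj : ∀ u ∈ S, ∀ v ∈ S, u ≠ v →
      adjL p (lab m p u.val) (lab m p v.val) := by
    intro u hu v hv hne
    obtain ⟨e, heH, hue, hve⟩ := hcov u hu v hv hne
    exact (mem_Hs.mp heH).2 u hue v hve hne
  -- labels are injective on S
  have hinj : Set.InjOn (fun u : Fin n => lab m p u.val) ↑S := by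
    intro u hu v hv h
    by_contra hne
    exact (hadj u hu v hv hne).1 h
  set T := S.image (fun u : Fin n => lab m p u.val) with hT
  have hTcard : T.card = p + 3 := by
    rw [hT, Finset.card_image_of_injOn hinj, hcard]
  -- at least 3 labels are ≥ p
  have hsplit : T = T.filter (fun k => k < p) ∪ T.filter (fun k => p ≤ k) := by
    rw [← Finset.filter_or]
    rw [Finset.filter_true_of_mem]
    intro k _; omega
  have h1 : (T.filter (fun k => k < p)).card ≤ p := by
    have : T.filter (fun k => k < p) ⊆ Finset.range p := by
      intro k hk
      simp only [mem_filter] at hk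
      simp only [Finset.mem_range]
      exact hk.2
    calc _ ≤ (Finset.range p).card := Finset.card_le_card this
    _ = p := Finset.card_range p
  have h2 : 2 < (T.filter (fun k => p ≤ k)).card := by
    have := Finset.card_union_le (T.filter (fun k => k < p)) (T.filter (fun k => p ≤ k))
    rw [← hsplit, hTcard] at this
    omega
  obtain ⟨a, b, c, ha, hb, hc, hab, hac, hbc⟩ := Finset.two_lt_card_iff.mp h2
  simp only [mem_filter, hT, Finset.mem_image] at ha hb hc
  obtain ⟨⟨ua, hua, hla⟩, hpa⟩ := ha
  obtain ⟨⟨ub, hub, hlb⟩, hpb⟩ := hb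
  obtain ⟨⟨uc, huc, hlc⟩, hpc⟩ := hc
  have hne_ab : ua ≠ ub := fun h => hab (by rw [← hla, ← hlb, h])
  have hne_ac : ua ≠ uc := fun h => hac (by rw [← hla, ← hlc, h])
  have hne_bc : ub ≠ uc := fun h => hbc (by rw [← hlb, ← hlc, h])
  have hAB := hadj ua hua ub hub hne_ab
  have hAC := hadj ua hua uc huc hne_ac
  have hBC := hadj ub hub uc huc hne_bc
  rw [hla, hlb] at hAB
  rw [hla, hlc] at hAC
  rw [hlb, hlc] at hBC
  have hca : a < p + 5 := by rw [← hla]; exact lab_lt hm (by omega)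
  have hcb : b < p + 5 := by rw [← hlb]; exact lab_lt hm (by omega)
  have hcc : c < p + 5 := by rw [← hlc]; exact lab_lt hm (by omega)
  have cAB : cyc (a-p) (b-p) := hAB.2 hpa hpb
  have cAC : cyc (a-p) (c-p) := hAC.2 hpa hpc
  have cBC : cyc (b-p) (c-p) := hBC.2 hpb hpc
  have hdec : ∀ x ∈ Finset.range 5, ∀ y ∈ Finset.range 5, ∀ z ∈ Finset.range 5,
      x ≠ y → x ≠ z → y ≠ z → cyc x y → cyc x z → cyc y z → False := by decide
  exact hdec (a-p) (Finset.mem_range.mpr (by omega)) (b-p) (Finset.mem_range.mpr (by omega))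
    (c-p) (Finset.mem_range.mpr (by omega))
    (by omega) (by omega) (by omega) cAB cAC cBC

/-- key construction step for saturation -/
lemma build_clique (hm : 0 < m) (hp : 2 ≤ p) (hn : n = 3*m*p + 5*m)
    (e : Finset (Fin n)) (x y : Fin n) (hx : x ∈ e) (hy : y ∈ e) (hxy : x ≠ y)
    (Λ : Finset ℕ) (hcard : Λ.card = p+1) (hlt : ∀ k ∈ Λ, k < p+5)
    (hadjx : ∀ k ∈ Λ, adjL p k (lab m p x.val))
    (hadjy : ∀ k ∈ Λ, adjL p k (lab m p y.val))
    (hpair : ∀ k ∈ Λ, ∀ k' ∈ Λ, k ≠ k' → adjL p k k') :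
    ContainsKFam (insert e (Hs n m p)) (p+2) := by
  classical
  set R : ℕ → Fin n := fun k => ⟨lo m p (min k (p+4)), by
    rw [hn]; exact lo_lt_n hm (by omega)⟩ with hRdef
  have hlabR : ∀ k ∈ Λ, lab m p (R k).val = k := by
    intro k hk
    have : min k (p+4) = k := min_eq_left (by have := hlt k hk; omega)
    simp only [hRdef, this]
    exact lab_lo hm (hlt k hk)
  have hRx : ∀ k ∈ Λ, R k ≠ x := by
    intro k hk hC
    have := hlabR k hk
    rw [hC] at this
    exact (hadjx k hk).1 (by rw [← this])
  have hRy : ∀ k ∈ Λ, R k ≠ y := by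
    intro k hk hC
    have := hlabR k hk
    rw [hC] at this
    exact (hadjy k hk).1 (by rw [← this])
  have hRinj : Set.InjOn R ↑Λ := by
    intro k hk k' hk' h
    rw [← hlabR k hk, ← hlabR k' hk', h]
  set S : Finset (Fin n) := insert x (insert y (Λ.image R)) with hSdef
  refine ⟨S, ?_, ?_⟩
  · rw [hSdef, Finset.card_insert_of_notMem, Finset.card_insert_of_notMem,
      Finset.card_image_of_injOn hRinj, hcard]
    · simp only [Finset.mem_image]
      rintro ⟨k, hk, hC⟩
      exact hRy k hk hC
    · simp only [Finset.mem_insert, Finset.mem_image]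
      push_neg
      refine ⟨hxy, ?_⟩
      rintro k hk hC
      exact hRx k hk hC
  · intro u hu v hv hne
    simp only [hSdef, Finset.mem_insert, Finset.mem_image] at hu hv
    have hcover : ∀ w1 w2 : Fin n, adjL p (lab m p w1.val) (lab m p w2.val) →
        ∃ f ∈ insert e (Hs n m p), w1 ∈ f ∧ w2 ∈ f := by
      intro w1 w2 hw
      obtain ⟨f, hf, h1, h2⟩ := covered_of_adj hm hp hn hw
      exact ⟨f, Finset.mem_insert_of_mem hf, h1, h2⟩
    rcases hu with rfl | rfl | ⟨k, hk, rfl⟩ <;> rcases hv with rfl | rfl | ⟨k', hk', rfl⟩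
    · exact absurd rfl hne
    · exact ⟨e, Finset.mem_insert_self _ _, hx, hy⟩
    · refine hcover _ _ ?_
      rw [hlabR k' hk']
      exact adjL_symm (hadjx k' hk')
    · exact ⟨e, Finset.mem_insert_self _ _, hy, hx⟩
    · exact absurd rfl hne
    · refine hcover _ _ ?_
      rw [hlabR k' hk']
      exact adjL_symm (hadjy k' hk')
    · refine hcover _ _ ?_
      rw [hlabR k hk]
      exact hadjx k hk
    · refine hcover _ _ ?_
      rw [hlabR k hk]
      exact hadjy k hk
    · have hkk' : k ≠ k' := by
        intro hC
        rw [hC] at hne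
        exact hne rfl
      refine hcover _ _ ?_
      rw [hlabR k hk, hlabR k' hk']
      exact hpair k hk k' hk' hkk'

end PCT
namespace PCT
open Finset

variable {n m p : ℕ}

lemma sat_Hs (hm : 0 < m) (hp : 2 ≤ p) (hn : n = 3*m*p + 5*m) :
    ∀ e : Finset (Fin n), e.card = 3 → e ∉ Hs n m p →
      ContainsKFam (insert e (Hs n m p)) (p+2) := by
  intro e hc3 heH
  rw [mem_Hs] at heH
  push_neg at heH
  obtain ⟨x, hx, y, hy, hxy, hnadj⟩ := heH hc3
  set i := lab m p x.val with hi
  set j := lab m p y.val with hj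
  have hi5 : i < p + 5 := lab_lt hm (by omega)
  have hj5 : j < p + 5 := lab_lt hm (by omega)
  by_cases hij : i = j
  · rcases Nat.lt_or_ge i p with hip | hip
    · -- same P label
      set Λ : Finset ℕ := ((Finset.range p).erase i) ∪ {p, p+1} with hΛ
      have hmem : ∀ k, k ∈ Λ ↔ ((k ≠ i ∧ k < p) ∨ k = p ∨ k = p+1) := by
        intro k
        simp only [hΛ, Finset.mem_union, Finset.mem_erase, Finset.mem_range,
          Finset.mem_insert, Finset.mem_singleton]
        all_goals tauto
      apply build_clique hm hp hn e x y hx hy hxy Λ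
      · rw [hΛ, Finset.card_union_of_disjoint, Finset.card_erase_of_mem
          (Finset.mem_range.mpr hip), Finset.card_range]
        · rw [Finset.card_insert_of_notMem (by simp), Finset.card_singleton]
          omega
        · rw [Finset.disjoint_left]
          intro k hk hk2
          simp only [Finset.mem_erase, Finset.mem_range] at hk
          simp only [Finset.mem_insert, Finset.mem_singleton] at hk2
          omega
      · intro k hk; rw [hmem] at hk; omega
      · intro k hk; rw [hmem] at hk
        rw [← hi]
        rcases hk with ⟨hne, hkp⟩ | rfl | rfl
        · exact adjL_of_lt_left hkp hne
        · exact adjL_of_lt_right hip (by omega)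
        · exact adjL_of_lt_right hip (by omega)
      · intro k hk; rw [hmem] at hk
        rw [← hj, ← hij]
        rcases hk with ⟨hne, hkp⟩ | rfl | rfl
        · exact adjL_of_lt_left hkp hne
        · exact adjL_of_lt_right hip (by omega)
        · exact adjL_of_lt_right hip (by omega)
      · intro k hk k' hk' hne
        rw [hmem] at hk hk'
        rcases hk with ⟨_, hkp⟩ | rfl | rfl <;> rcases hk' with ⟨_, hkp'⟩ | rfl | rfl <;>
          first
          | exact absurd rfl hne
          | exact adjL_of_lt_left (by omega) hne
          | exact adjL_of_lt_right (by omega) hne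
          | exact adjL_of_cyc (by omega) (by omega) (by unfold cyc; omega)
    · -- same A label
      set q := ((i - p) + 1) % 5 with hq
      have hq5 : q < 5 := Nat.mod_lt _ (by omega)
      have hcycq : cyc q (i - p) := by
        have : ∀ s ∈ Finset.range 5, cyc ((s+1)%5) s := by decide
        exact this (i-p) (Finset.mem_range.mpr (by omega))
      set Λ : Finset ℕ := Finset.range p ∪ {p + q} with hΛ
      have hmem : ∀ k, k ∈ Λ ↔ (k < p ∨ k = p + q) := by
        intro k
        simp only [hΛ, Finset.mem_union, Finset.mem_range, Finset.mem_singleton]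
      apply build_clique hm hp hn e x y hx hy hxy Λ
      · rw [hΛ, Finset.card_union_of_disjoint, Finset.card_range, Finset.card_singleton]
        rw [Finset.disjoint_left]
        intro k hk hk2
        simp only [Finset.mem_range] at hk
        simp only [Finset.mem_singleton] at hk2
        omega
      · intro k hk; rw [hmem] at hk; omega
      · intro k hk; rw [hmem] at hk
        rw [← hi]
        rcases hk with hkp | rfl
        · exact adjL_of_lt_left hkp (by omega)
        · exact adjL_of_cyc (by omega) hip (by
            have : p + q - p = q := by omega
            rw [this]; exact hcycq)
      · intro k hk; rw [hmem] at hk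
        rw [← hj, ← hij]
        rcases hk with hkp | rfl
        · exact adjL_of_lt_left hkp (by omega)
        · exact adjL_of_cyc (by omega) hip (by
            have : p + q - p = q := by omega
            rw [this]; exact hcycq)
      · intro k hk k' hk' hne
        rw [hmem] at hk hk'
        rcases hk with hkp | rfl <;> rcases hk' with hkp' | rfl <;>
          first
          | exact absurd rfl hne
          | exact adjL_of_lt_left (by omega) hne
          | exact adjL_of_lt_right (by omega) hne
  · -- distinct labels, necessarily two non-consecutive A labels
    have hrest : p ≤ i ∧ p ≤ j ∧ ¬ cyc (i-p) (j-p) := by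
      have h1 : ¬ (p ≤ i → p ≤ j → cyc (i-p) (j-p)) := fun h => hnadj ⟨hij, h⟩
      push_neg at h1
      exact h1
    obtain ⟨hpi, hpj, hnc⟩ := hrest
    have hmid : ∀ s ∈ Finset.range 5, ∀ t ∈ Finset.range 5, s ≠ t → ¬ cyc s t →
        ∃ u ∈ Finset.range 5, u ≠ s ∧ u ≠ t ∧ cyc u s ∧ cyc u t := by decide
    obtain ⟨u, hu5, hus, hut, hcs, hct⟩ := hmid (i-p) (Finset.mem_range.mpr (by omega))
      (j-p) (Finset.mem_range.mpr (by omega)) (by omega) hnc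
    rw [Finset.mem_range] at hu5
    set Λ : Finset ℕ := Finset.range p ∪ {p + u} with hΛ
    have hmem : ∀ k, k ∈ Λ ↔ (k < p ∨ k = p + u) := by
      intro k
      simp only [hΛ, Finset.mem_union, Finset.mem_range, Finset.mem_singleton]
    apply build_clique hm hp hn e x y hx hy hxy Λ
    · rw [hΛ, Finset.card_union_of_disjoint, Finset.card_range, Finset.card_singleton]
      rw [Finset.disjoint_left]
      intro k hk hk2
      simp only [Finset.mem_range] at hk
      simp only [Finset.mem_singleton] at hk2
      omega
    · intro k hk; rw [hmem] at hk; omega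
    · intro k hk; rw [hmem] at hk
      rw [← hi]
      rcases hk with hkp | rfl
      · exact adjL_of_lt_left hkp (by omega)
      · exact adjL_of_cyc (by omega) hpi (by
          have : p + u - p = u := by omega
          rw [this]; exact hcs)
    · intro k hk; rw [hmem] at hk
      rw [← hj]
      rcases hk with hkp | rfl
      · exact adjL_of_lt_left hkp (by omega)
      · exact adjL_of_cyc (by omega) hpj (by
          have : p + u - p = u := by omega
          rw [this]; exact hct)
    · intro k hk k' hk' hne
      rw [hmem] at hk hk'
      rcases hk with hkp | rfl <;> rcases hk' with hkp' | rfl <;>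
        first
        | exact absurd rfl hne
        | exact adjL_of_lt_left (by omega) hne
        | exact adjL_of_lt_right (by omega) hne

end PCT
namespace PCT
open Finset

variable {n m p : ℕ}

/-- the proper `(p+3)`-coloring of labels -/
def col (p k : ℕ) : ℕ :=
  if k < p then k else if k = p then p else if k = p+1 then p+1
    else if k = p+2 then p else if k = p+3 then p+1 else p+2

lemma col_lt {k : ℕ} (hk : k < p+5) : col p k < p+3 := by
  unfold col; split_ifs <;> omega

lemma col_ne {i j : ℕ} (hi : i < p+5) (hj : j < p+5) (h : adjL p i j) :
    col p i ≠ col p j := by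
  obtain ⟨h1, h2⟩ := h
  rcases Nat.lt_or_ge i p with hip | hip <;> rcases Nat.lt_or_ge j p with hjp | hjp
  · unfold col; split_ifs <;> omega
  · unfold col; split_ifs <;> omega
  · unfold col; split_ifs <;> omega
  · have hc := h2 hip hjp
    unfold cyc at hc
    unfold col; split_ifs <;> omega

lemma partite_Hs (hm : 0 < m) (hn : n = 3*m*p + 5*m) :
    ∃ f : Fin n → Fin (p+3), ∀ e ∈ Hs n m p, Set.InjOn f ↑e := by
  refine ⟨fun v => ⟨col p (lab m p v.val), col_lt (lab_lt hm (by omega))⟩, ?_⟩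
  intro e he
  intro u hu v hv hfeq
  by_contra hne
  have hadj := (mem_Hs.mp he).2 u hu v hv hne
  have := col_ne (lab_lt hm (by omega)) (lab_lt hm (by omega)) hadj
  exact this (congrArg Fin.val hfeq)

lemma not_partite_Hs (hm : 0 < m) (hp : 2 ≤ p) (hn : n = 3*m*p + 5*m)
    (f : Fin n → Fin (p+2)) (hf : ∀ e ∈ Hs n m p, Set.InjOn f ↑e) : False := by
  classical
  set R : ℕ → Fin n := fun k => ⟨lo m p (min k (p+4)), by
    rw [hn]; exact lo_lt_n hm (by omega)⟩ with hRdef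
  have hlabR : ∀ k, k < p+5 → lab m p (R k).val = k := by
    intro k hk
    have : min k (p+4) = k := min_eq_left (by omega)
    simp only [hRdef, this]
    exact lab_lo hm hk
  have hdist : ∀ k k', k < p+5 → k' < p+5 → adjL p k k' → f (R k) ≠ f (R k') := by
    intro k k' hk hk' hadj hfeq
    have hadj' : adjL p (lab m p (R k).val) (lab m p (R k').val) := by
      rw [hlabR k hk, hlabR k' hk']; exact hadj
    obtain ⟨e, he, h1, h2⟩ := covered_of_adj hm hp hn hadj'
    have := hf e he h1 h2 hfeq
    rw [← hlabR k hk, ← hlabR k' hk', this] at hadj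
    exact hadj.1 rfl
  set Rimg : Finset (Fin (p+2)) := (Finset.range p).image (fun k => f (R k)) with hRimg
  have hRimgcard : Rimg.card = p := by
    rw [hRimg, Finset.card_image_of_injOn, Finset.card_range]
    intro k hk k' hk' h
    simp only [Finset.coe_range, Set.mem_Iio] at hk hk'
    by_contra hne
    exact hdist k k' (by omega) (by omega) (adjL_of_lt_left hk hne) h
  set B : Finset (Fin (p+2)) := Finset.univ \ Rimg with hB
  have hBcard : B.card = 2 := by
    rw [hB, Finset.card_sdiff_of_subset (Finset.subset_univ _), Finset.card_univ,
      Fintype.card_fin, hRimgcard]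
    omega
  obtain ⟨c, d, hcd, hBcd⟩ := Finset.card_eq_two.mp hBcard
  have hasB : ∀ s, s < 5 → f (R (p+s)) = c ∨ f (R (p+s)) = d := by
    intro s hs
    have : f (R (p+s)) ∈ B := by
      rw [hB, Finset.mem_sdiff]
      refine ⟨Finset.mem_univ _, ?_⟩
      rw [hRimg]
      simp only [Finset.mem_image, Finset.mem_range]
      rintro ⟨k, hk, hkeq⟩
      exact hdist (p+s) k (by omega) (by omega)
        (adjL_of_lt_right hk (by omega)) hkeq.symm
    rw [hBcd] at this
    simpa using this
  have hcyc : ∀ s t, s < 5 → t < 5 → cyc s t → f (R (p+s)) ≠ f (R (p+t)) := by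
    intro s t hs ht hc
    apply hdist (p+s) (p+t) (by omega) (by omega)
    apply adjL_of_cyc (by omega) (by omega)
    have e1 : p + s - p = s := by omega
    have e2 : p + t - p = t := by omega
    rw [e1, e2]; exact hc
  have h01 := hcyc 0 1 (by omega) (by omega) (by unfold cyc; omega)
  have h12 := hcyc 1 2 (by omega) (by omega) (by unfold cyc; omega)
  have h23 := hcyc 2 3 (by omega) (by omega) (by unfold cyc; omega)
  have h34 := hcyc 3 4 (by omega) (by omega) (by unfold cyc; omega)
  have h40 := hcyc 4 0 (by omega) (by omega) (by unfold cyc; omega)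
  have a0 := hasB 0 (by omega)
  have a1 := hasB 1 (by omega)
  have a2 := hasB 2 (by omega)
  have a3 := hasB 3 (by omega)
  have a4 := hasB 4 (by omega)
  rcases a0 with h|h <;> rcases a1 with h'|h' <;> rcases a2 with h''|h'' <;>
    rcases a3 with h'''|h''' <;> rcases a4 with h''''|h'''' <;>
    first
    | exact h01 (h.trans h'.symm)
    | exact h12 (h'.trans h''.symm)
    | exact h23 (h''.trans h'''.symm)
    | exact h34 (h'''.trans h''''.symm)
    | exact h40 (h''''.trans h.symm)

end PCT
/-- tightness of the positive co-degree bound, `ℓ ≥ 4`. -/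
theorem posCodeg_stability_tight
    (ℓ n : ℕ) (hℓ : 4 ≤ ℓ) (hn : 0 < n) (hdvd : (3 * ℓ - 1) ∣ n) :
    ∃ H : Finset (Finset (Fin n)),
      (∀ e ∈ H, e.card = 3) ∧ H.Nonempty ∧ KFamSaturated H 3 ℓ ∧
      (minPosCodeg H : ℝ) = (3 * (ℓ : ℝ) - 7) / (3 * (ℓ : ℝ) - 1) * (n : ℝ) ∧
      (∃ f : Fin n → Fin (ℓ + 1), ∀ e ∈ H, Set.InjOn f ↑e) ∧
      ¬ (∃ f : Fin n → Fin ℓ, ∀ e ∈ H, Set.InjOn f ↑e) := by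
  classical
  obtain ⟨m, hmeq⟩ := hdvd
  set p : ℕ := ℓ - 2 with hpdef
  have hp : 2 ≤ p := by omega
  have hℓp : ℓ = p + 2 := by omega
  have hm : 0 < m := by
    rcases Nat.eq_zero_or_pos m with rfl | h
    · omega
    · exact h
  have hn' : n = 3*m*p + 5*m := by
    have h1 : 3 * ℓ - 1 = 3*p + 5 := by omega
    rw [h1] at hmeq
    rw [hmeq]; ring
  refine ⟨PCT.Hs n m p, ?_, ?_, ?_, ?_, ?_, ?_⟩
  · intro e he
    exact (PCT.mem_Hs.mp he).1
  · -- nonempty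
    set u : Fin n := ⟨PCT.lo m p 0, by rw [hn']; exact PCT.lo_lt_n hm (by omega)⟩ with hudef
    set v : Fin n := ⟨PCT.lo m p 1, by rw [hn']; exact PCT.lo_lt_n hm (by omega)⟩ with hvdef
    have hu : PCT.lab m p u.val = 0 := PCT.lab_lo hm (by omega)
    have hv : PCT.lab m p v.val = 1 := PCT.lab_lo hm (by omega)
    have hadj : PCT.adjL p (PCT.lab m p u.val) (PCT.lab m p v.val) := by
      rw [hu, hv]
      exact PCT.adjL_of_lt_left (by omega) (by omega)
    obtain ⟨e, he, _, _⟩ := PCT.covered_of_adj hm hp hn' hadj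
    exact ⟨e, he⟩
  · -- saturated
    constructor
    · rw [hℓp]
      exact PCT.free_Hs hm hp hn'
    · intro e hce henot
      rw [hℓp]
      exact PCT.sat_Hs hm hp hn' e hce henot
  · -- min positive codegree
    rw [PCT.minPosCodeg_Hs hm hp hn']
    have h6 : 6*m ≤ 3*m*p + 5*m := by
      have : 3*m*2 ≤ 3*m*p := Nat.mul_le_mul_left _ hp
      omega
    rw [Nat.cast_sub h6]
    have hncast : (n : ℝ) = 3*(m:ℝ)*(p:ℝ) + 5*(m:ℝ) := by
      rw [hn']; push_cast; ring
    have hlcast : (ℓ : ℝ) = (p:ℝ) + 2 := by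
      rw [hℓp]; push_cast; ring
    have hpos : (0:ℝ) < 3 * (ℓ:ℝ) - 1 := by
      rw [hlcast]
      have : (0:ℝ) ≤ (p:ℝ) := Nat.cast_nonneg p
      linarith
    rw [hncast, hlcast]
    rw [div_mul_eq_mul_div, eq_div_iff (by linarith)]
    push_cast
    ring
  · -- (ℓ+1)-partite
    obtain ⟨f, hf⟩ := PCT.partite_Hs hm hn' (p := p)
    refine ⟨fun v => Fin.cast (by omega) (f v), ?_⟩
    intro e he a ha b hb hab
    refine hf e he ha hb ?_
    have h3 := congrArg Fin.val hab
    simp only [Fin.coe_cast] at h3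
    exact Fin.ext h3
  · -- not l-partite
    rintro ⟨f, hf⟩
    apply PCT.not_partite_Hs hm hp hn' (fun v => Fin.cast (by omega) (f v))
    intro e he a ha b hb hab
    refine hf e he ha hb ?_
    have h3 := congrArg Fin.val hab
    simp only [Fin.coe_cast] at h3
    exact Fin.ext h3
end

section
/- For every positive integer n divisible by 7, there exists a 𝒦_4^3-saturated 3-graph H on n vertices with δ₂⁺(H) = 2n/7 such that H is 4-partite but not 3-partite. -/
set_option maxRecDepth 100000

open Finset

/-! ### Auxiliary construction -/

/-- The base 3-graph on 7 vertices. -/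
def B7 : Finset (Finset (Fin 7)) :=
  {{0,1,2},{0,1,3},{0,2,4},{0,3,4},{1,2,5},{1,3,5},{2,4,6},{2,5,6},{3,4,6},{3,5,6}}

/-- The residue map. -/
def res {n : ℕ} (x : Fin n) : Fin 7 := ⟨x.val % 7, Nat.mod_lt _ (by norm_num)⟩

/-- The blow-up of `B7` on `Fin n`. -/
def Hn (n : ℕ) : Finset (Finset (Fin n)) :=
  (Finset.univ.powersetCard 3).filter (fun e => e.image res ∈ B7)

lemma B7_card : ∀ b ∈ B7, b.card = 3 := by decide

lemma B7_ne : ∀ i j k : Fin 7, ({i,j,k} : Finset (Fin 7)) ∈ B7 → i ≠ j ∧ i ≠ k ∧ j ≠ k := by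
  decide

lemma B7_codeg : ∀ i j : Fin 7, (∃ k, ({i,j,k} : Finset (Fin 7)) ∈ B7) →
    (Finset.univ.filter fun k : Fin 7 => ({i,j,k} : Finset (Fin 7)) ∈ B7).card = 2 := by decide

lemma B7_sat : ∀ i j k : Fin 7, ({i,j,k} : Finset (Fin 7)) ∉ B7 →
    ∃ l : Fin 7, l ≠ i ∧ l ≠ j ∧ l ≠ k ∧ (∃ a, ({i,l,a} : Finset (Fin 7)) ∈ B7) ∧
      (∃ a, ({j,l,a} : Finset (Fin 7)) ∈ B7) ∧ (∃ a, ({k,l,a} : Finset (Fin 7)) ∈ B7) := by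
  decide

lemma B7_k4 : ∀ T : Finset (Fin 7), T.card = 4 →
    ∃ i ∈ T, ∃ j ∈ T, i ≠ j ∧ ∀ k, ({i,j,k} : Finset (Fin 7)) ∉ B7 := by decide

lemma fin3_contra' : ∀ x0 x1 x2 x4 x5 x6 : Fin 3, ¬(x0 ≠ x1 ∧ x0 ≠ x2 ∧ x1 ≠ x2 ∧ x0 ≠ x4 ∧
    x2 ≠ x4 ∧ x2 ≠ x6 ∧ x4 ≠ x6 ∧ x1 ≠ x5 ∧ x2 ≠ x5 ∧ x5 ≠ x6) := by decide

lemma fin3_contra : ∀ x0 x1 x2 x4 x5 x6 : Fin 3, x0 ≠ x1 → x0 ≠ x2 → x1 ≠ x2 → x0 ≠ x4 →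
    x2 ≠ x4 → x2 ≠ x6 → x4 ≠ x6 → x1 ≠ x5 → x2 ≠ x5 → x5 ≠ x6 → False := by
  intro x0 x1 x2 x4 x5 x6 h1 h2 h3 h4 h5 h6 h7 h8 h9 h10
  exact fin3_contra' x0 x1 x2 x4 x5 x6 ⟨h1, h2, h3, h4, h5, h6, h7, h8, h9, h10⟩

lemma B7_c4 : ∀ e ∈ B7, ∀ i ∈ e, ∀ j ∈ e, i ≠ j →
    (![0,1,2,2,1,0,3] : Fin 7 → Fin 4) i ≠ ![0,1,2,2,1,0,3] j := by decide

lemma mem_Hn {n : ℕ} {e : Finset (Fin n)} : e ∈ Hn n ↔ e.card = 3 ∧ e.image res ∈ B7 := by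
  unfold Hn
  rw [Finset.mem_filter, Finset.mem_powersetCard]
  constructor
  · rintro ⟨⟨-, h⟩, h2⟩; exact ⟨h, h2⟩
  · rintro ⟨h, h2⟩; exact ⟨⟨Finset.subset_univ _, h⟩, h2⟩

lemma third_elt {α : Type*} [DecidableEq α] {e : Finset α} {u v : α} (h3 : e.card = 3)
    (hu : u ∈ e) (hv : v ∈ e) (huv : u ≠ v) : ∃ w, w ≠ u ∧ w ≠ v ∧ e = {u, v, w} := by
  have hss : ({u, v} : Finset α) ⊆ e := by
    intro x hx
    rcases Finset.mem_insert.mp hx with h | h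
    · exact h ▸ hu
    · exact (Finset.mem_singleton.mp h) ▸ hv
  have hcd : (e \ {u, v}).card = 1 := by
    rw [Finset.card_sdiff_of_subset hss, h3, Finset.card_pair huv]
  obtain ⟨w, hw⟩ := Finset.card_eq_one.mp hcd
  have hwm : w ∈ e \ {u, v} := by rw [hw]; exact Finset.mem_singleton_self w
  rw [Finset.mem_sdiff, Finset.mem_insert, Finset.mem_singleton] at hwm
  obtain ⟨hwe, hwuv⟩ := hwm
  push_neg at hwuv
  refine ⟨w, hwuv.1, hwuv.2, ?_⟩
  have hun : ({u, v} : Finset α) ∪ (e \ {u, v}) = e := Finset.union_sdiff_of_subset hss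
  rw [hw] at hun
  rw [← hun]
  ext x
  simp [or_assoc]

lemma edge_props {n : ℕ} {E : Finset (Fin n)} (hE : E ∈ Hn n) :
    E.card = 3 ∧ Set.InjOn res (E : Set (Fin n)) ∧ E.image res ∈ B7 := by
  obtain ⟨h3, hB⟩ := mem_Hn.mp hE
  have himg := B7_card _ hB
  exact ⟨h3, Finset.injOn_of_card_image_eq (by rw [himg, h3]), hB⟩

lemma covered_props {n : ℕ} {u v : Fin n} (huv : u ≠ v)
    (h : ∃ E ∈ Hn n, u ∈ E ∧ v ∈ E) :
    res u ≠ res v ∧ ∃ k, ({res u, res v, k} : Finset (Fin 7)) ∈ B7 := by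
  obtain ⟨E, hE, hu, hv⟩ := h
  obtain ⟨h3, hinj, hB⟩ := edge_props hE
  have hg : res u ≠ res v := fun hh => huv (hinj (Finset.mem_coe.mpr hu) (Finset.mem_coe.mpr hv) hh)
  have himg3 : (E.image res).card = 3 := B7_card _ hB
  obtain ⟨k, _, _, hk⟩ := third_elt himg3 (Finset.mem_image_of_mem res hu)
    (Finset.mem_image_of_mem res hv) hg
  exact ⟨hg, k, hk ▸ hB⟩

lemma fiber_card {n m : ℕ} (hnm : n = 7 * m) (k : Fin 7) :
    (Finset.univ.filter fun w : Fin n => res w = k).card = m := by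
  have h := Finset.card_bij'
    (s := Finset.univ.filter fun w : Fin n => res w = k)
    (t := (Finset.univ : Finset (Fin m)))
    (fun a _ => ⟨a.val / 7, by have := a.isLt; omega⟩)
    (fun b _ => ⟨7 * b.val + k.val, by have := b.isLt; have := k.isLt; omega⟩)
    (fun a _ => Finset.mem_univ _)
    (fun b _ => by
      refine Finset.mem_filter.mpr ⟨Finset.mem_univ _, ?_⟩
      apply Fin.ext
      show (7 * b.val + k.val) % 7 = k.val
      omega)
    (fun a ha => by
      have hak : a.val % 7 = k.val := congrArg Fin.val (Finset.mem_filter.mp ha).2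
      apply Fin.ext
      show 7 * (a.val / 7) + k.val = a.val
      omega)
    (fun b _ => by
      apply Fin.ext
      show (7 * b.val + k.val) / 7 = b.val
      omega)
  rw [h, Finset.card_univ, Fintype.card_fin]

lemma builder {n m : ℕ} (hnm : n = 7 * m) (hm : 0 < m) {a b : Fin n}
    (hcov : ∃ k, ({res a, res b, k} : Finset (Fin 7)) ∈ B7) :
    ∃ E ∈ Hn n, a ∈ E ∧ b ∈ E := by
  obtain ⟨k, hk⟩ := hcov
  obtain ⟨hab7, hak7, hbk7⟩ := B7_ne _ _ _ hk
  obtain ⟨y, hy⟩ := Finset.card_pos.mp (by rw [fiber_card hnm k]; exact hm)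
  have hyk : res y = k := (Finset.mem_filter.mp hy).2
  have hab : a ≠ b := fun h => hab7 (by rw [h])
  have hay : a ≠ y := fun h => hak7 (by rw [h, hyk])
  have hby : b ≠ y := fun h => hbk7 (by rw [h, hyk])
  refine ⟨{a, b, y}, mem_Hn.mpr ⟨Finset.card_eq_three.mpr ⟨a, b, y, hab, hay, hby, rfl⟩, ?_⟩,
    by simp, by simp⟩
  have himg : ({a, b, y} : Finset (Fin n)).image res = {res a, res b, res y} := by
    simp [Finset.image_insert]
  rw [himg, hyk]
  exact hk

lemma count_eq {n m : ℕ} (hnm : n = 7 * m) {u v : Fin n} (huv : u ≠ v)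
    (hcov : ∃ k, ({res u, res v, k} : Finset (Fin 7)) ∈ B7) :
    ((Hn n).filter fun e => u ∈ e ∧ v ∈ e).card = 2 * m := by
  classical
  set W := Finset.univ.filter
    (fun w : Fin n => ({res u, res v, res w} : Finset (Fin 7)) ∈ B7) with hWdef
  have himg : (Hn n).filter (fun e => u ∈ e ∧ v ∈ e)
      = W.image (fun w => ({u, v, w} : Finset (Fin n))) := by
    ext E
    simp only [Finset.mem_filter, Finset.mem_image]
    constructor
    · rintro ⟨hE, hu, hv⟩
      obtain ⟨h3, hinj, hB⟩ := edge_props hE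
      obtain ⟨w, hwu, hwv, hEw⟩ := third_elt h3 hu hv huv
      refine ⟨w, ?_, hEw.symm⟩
      refine Finset.mem_filter.mpr ⟨Finset.mem_univ _, ?_⟩
      have himg2 : E.image res = {res u, res v, res w} := by
        rw [hEw]; simp [Finset.image_insert]
      rw [← himg2]
      exact hB
    · rintro ⟨w, hwW, rfl⟩
      have hB : ({res u, res v, res w} : Finset (Fin 7)) ∈ B7 :=
        (Finset.mem_filter.mp hwW).2
      obtain ⟨huv7, huw7, hvw7⟩ := B7_ne _ _ _ hB
      have hwu : u ≠ w := fun h => huw7 (by rw [h])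
      have hwv : v ≠ w := fun h => hvw7 (by rw [h])
      refine ⟨mem_Hn.mpr ⟨Finset.card_eq_three.mpr ⟨u, v, w, huv, hwu, hwv, rfl⟩, ?_⟩,
        by simp, by simp⟩
      have himg2 : ({u, v, w} : Finset (Fin n)).image res = {res u, res v, res w} := by
        simp [Finset.image_insert]
      rw [himg2]
      exact hB
  have hinjW : Set.InjOn (fun w => ({u, v, w} : Finset (Fin n))) (W : Set (Fin n)) := by
    intro a ha b hb hab
    have haB := (Finset.mem_filter.mp (Finset.mem_coe.mp ha)).2
    obtain ⟨_, hua7, hva7⟩ := B7_ne _ _ _ haB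
    have hau : a ≠ u := fun h => hua7 (by rw [h])
    have hav : a ≠ v := fun h => hva7 (by rw [h])
    have hab' : ({u, v, a} : Finset (Fin n)) = {u, v, b} := hab
    have hmem : a ∈ ({u, v, b} : Finset (Fin n)) := by
      rw [← hab']; simp
    rcases Finset.mem_insert.mp hmem with h | h
    · exact absurd h hau
    rcases Finset.mem_insert.mp h with h | h
    · exact absurd h hav
    · exact Finset.mem_singleton.mp h
  rw [himg, Finset.card_image_of_injOn hinjW]
  set D := Finset.univ.filter
    (fun k : Fin 7 => ({res u, res v, k} : Finset (Fin 7)) ∈ B7) with hDdef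
  have hmap : ∀ w ∈ W, res w ∈ D := fun w hw =>
    Finset.mem_filter.mpr ⟨Finset.mem_univ _, (Finset.mem_filter.mp hw).2⟩
  rw [Finset.card_eq_sum_card_fiberwise hmap]
  have hfib : ∀ k ∈ D, (W.filter fun w => res w = k).card = m := by
    intro k hk
    have hkB := (Finset.mem_filter.mp hk).2
    have : (W.filter fun w => res w = k) = (Finset.univ.filter fun w : Fin n => res w = k) := by
      ext w
      simp only [hWdef, Finset.mem_filter, Finset.mem_univ, true_and]
      constructor
      · rintro ⟨-, h⟩; exact h
      · intro h; exact ⟨by rw [h]; exact hkB, h⟩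
    rw [this, fiber_card hnm]
  rw [Finset.sum_congr rfl hfib, Finset.sum_const, smul_eq_mul]
  have hD2 : D.card = 2 := B7_codeg (res u) (res v) hcov
  rw [hD2]

/-- tightness of the positive co-degree bound, `ℓ = 3`. -/
theorem posCodeg_stability_tight_three
    (n : ℕ) (hn : 0 < n) (hdvd : 7 ∣ n) :
    ∃ H : Finset (Finset (Fin n)),
      (∀ e ∈ H, e.card = 3) ∧ H.Nonempty ∧ KFamSaturated H 3 3 ∧
      (minPosCodeg H : ℝ) = 2 * (n : ℝ) / 7 ∧
      (∃ f : Fin n → Fin 4, ∀ e ∈ H, Set.InjOn f ↑e) ∧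
      ¬ (∃ f : Fin n → Fin 3, ∀ e ∈ H, Set.InjOn f ↑e) := by
  obtain ⟨m, hnm⟩ := hdvd
  have hm : 0 < m := by omega
  have h7n : 7 ≤ n := by omega
  set emb : Fin 7 → Fin n := fun i => ⟨i.val, lt_of_lt_of_le i.isLt h7n⟩ with hembdef
  have hres_emb : ∀ i, res (emb i) = i := fun i => Fin.ext (Nat.mod_eq_of_lt i.isLt)
  have hemb_inj : Function.Injective emb := by
    intro i j h
    apply Fin.ext
    have := congrArg Fin.val h
    simpa [hembdef] using this
  have hcov01 : ∃ k, ({res (emb 0), res (emb 1), k} : Finset (Fin 7)) ∈ B7 := by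
    refine ⟨2, ?_⟩
    rw [hres_emb, hres_emb]
    decide
  have hne01 : emb 0 ≠ emb 1 := by
    intro h
    have := congrArg Fin.val h
    simp [hembdef] at this
  refine ⟨Hn n, fun e he => (mem_Hn.mp he).1, ?_, ⟨?_, ?_⟩, ?_, ?_, ?_⟩
  · -- Nonempty
    obtain ⟨E, hE, -, -⟩ := builder hnm hm hcov01
    exact ⟨E, hE⟩
  · -- free
    rintro ⟨S, hS4, hpair⟩
    have hinj : Set.InjOn res (S : Set (Fin n)) := by
      intro a ha b hb hab
      by_contra hne
      exact (covered_props hne (hpair a (Finset.mem_coe.mp ha) b (Finset.mem_coe.mp hb) hne)).1 hab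
    have hT4 : (S.image res).card = 4 := by rw [Finset.card_image_of_injOn hinj, hS4]
    obtain ⟨i, hi, j, hj, hij, hnok⟩ := B7_k4 _ hT4
    obtain ⟨a, ha, rfl⟩ := Finset.mem_image.mp hi
    obtain ⟨b, hb, rfl⟩ := Finset.mem_image.mp hj
    have hab : a ≠ b := fun h => hij (by rw [h])
    obtain ⟨-, k, hk⟩ := covered_props hab (hpair a ha b hb hab)
    exact hnok k hk
  · -- saturated
    intro e he3 heH
    have hiB : e.image res ∉ B7 := fun h => heH (mem_Hn.mpr ⟨he3, h⟩)
    obtain ⟨x, y, z, hxy, hxz, hyz, rfl⟩ := Finset.card_eq_three.mp he3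
    have himg : ({x, y, z} : Finset (Fin n)).image res = {res x, res y, res z} := by
      simp [Finset.image_insert]
    rw [himg] at hiB
    obtain ⟨l, hlx, hly, hlz, c1, c2, c3⟩ := B7_sat _ _ _ hiB
    obtain ⟨w, hwmem⟩ := Finset.card_pos.mp (by rw [fiber_card hnm l]; exact hm)
    have hwl : res w = l := (Finset.mem_filter.mp hwmem).2
    have hwin : w ∉ ({x, y, z} : Finset (Fin n)) := by
      simp only [Finset.mem_insert, Finset.mem_singleton]
      push_neg
      refine ⟨fun h => hlx (by rw [← hwl, h]), fun h => hly (by rw [← hwl, h]),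
        fun h => hlz (by rw [← hwl, h])⟩
    have hwx : ∃ E ∈ Hn n, x ∈ E ∧ w ∈ E := builder hnm hm (by rw [hwl]; exact c1)
    have hwy : ∃ E ∈ Hn n, y ∈ E ∧ w ∈ E := builder hnm hm (by rw [hwl]; exact c2)
    have hwz : ∃ E ∈ Hn n, z ∈ E ∧ w ∈ E := builder hnm hm (by rw [hwl]; exact c3)
    have key : ∀ u ∈ ({x, y, z} : Finset (Fin n)), ∃ E ∈ Hn n, u ∈ E ∧ w ∈ E := by
      intro u hu
      rcases Finset.mem_insert.mp hu with rfl | hu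
      · exact hwx
      rcases Finset.mem_insert.mp hu with rfl | hu
      · exact hwy
      rw [Finset.mem_singleton] at hu
      subst hu
      exact hwz
    refine ⟨insert w {x, y, z}, by rw [Finset.card_insert_of_notMem hwin, he3], ?_⟩
    intro u hu v hv huv
    rcases Finset.mem_insert.mp hu with rfl | hue
    · rcases Finset.mem_insert.mp hv with rfl | hve
      · exact absurd rfl huv
      · obtain ⟨E, hE, hvE, hwE⟩ := key v hve
        exact ⟨E, Finset.mem_insert_of_mem hE, hwE, hvE⟩
    · rcases Finset.mem_insert.mp hv with rfl | hve
      · obtain ⟨E, hE, huE, hwE⟩ := key u hue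
        exact ⟨E, Finset.mem_insert_of_mem hE, huE, hwE⟩
      · exact ⟨{x, y, z}, Finset.mem_insert_self _ _, hue, hve⟩
  · -- minPosCodeg
    have hmem : (2 * m) ∈ {k | ∀ u v : Fin n, u ≠ v → (∃ e ∈ Hn n, u ∈ e ∧ v ∈ e) →
        k ≤ ((Hn n).filter fun e => u ∈ e ∧ v ∈ e).card} := by
      intro u v huv hcovH
      obtain ⟨-, hcov⟩ := covered_props huv hcovH
      rw [count_eq hnm huv hcov]
    have hub : ∀ k ∈ {k | ∀ u v : Fin n, u ≠ v → (∃ e ∈ Hn n, u ∈ e ∧ v ∈ e) →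
        k ≤ ((Hn n).filter fun e => u ∈ e ∧ v ∈ e).card}, k ≤ 2 * m := by
      intro k hk
      have hcnt := count_eq hnm hne01 hcov01
      have hle := hk (emb 0) (emb 1) hne01 (builder hnm hm hcov01)
      rw [hcnt] at hle
      exact hle
    have hval : minPosCodeg (Hn n) = 2 * m := by
      unfold minPosCodeg
      exact le_antisymm (csSup_le ⟨2 * m, hmem⟩ hub) (le_csSup ⟨2 * m, hub⟩ hmem)
    rw [hval, hnm]
    push_cast
    ring
  · -- 4-partite
    refine ⟨fun x => ![0,1,2,2,1,0,3] (res x), ?_⟩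
    intro e he
    obtain ⟨h3, hinj, hB⟩ := edge_props he
    intro a ha b hb hfab
    by_contra hne
    have hgne : res a ≠ res b := fun h => hne (hinj ha hb h)
    exact B7_c4 _ hB _ (Finset.mem_image_of_mem res (Finset.mem_coe.mp ha)) _
      (Finset.mem_image_of_mem res (Finset.mem_coe.mp hb)) hgne hfab
  · -- not 3-partite
    rintro ⟨f, hf⟩
    set c : Fin 7 → Fin 3 := fun i => f (emb i) with hcdef
    have hedge : ∀ i j k : Fin 7, ({i, j, k} : Finset (Fin 7)) ∈ B7 → c i ≠ c j := by
      intro i j k hB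
      obtain ⟨hij, hik, hjk⟩ := B7_ne _ _ _ hB
      have hE : ({emb i, emb j, emb k} : Finset (Fin n)) ∈ Hn n := by
        refine mem_Hn.mpr ⟨Finset.card_eq_three.mpr ⟨_, _, _, fun h => hij (hemb_inj h),
          fun h => hik (hemb_inj h), fun h => hjk (hemb_inj h), rfl⟩, ?_⟩
        have himg : ({emb i, emb j, emb k} : Finset (Fin n)).image res
            = {res (emb i), res (emb j), res (emb k)} := by simp [Finset.image_insert]
        rw [himg, hres_emb, hres_emb, hres_emb]
        exact hB
      intro hcij
      have := hf _ hE (show emb i ∈ (↑({emb i, emb j, emb k} : Finset (Fin n)) : Set (Fin n))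
        by simp) (show emb j ∈ (↑({emb i, emb j, emb k} : Finset (Fin n)) : Set (Fin n))
        by simp) hcij
      exact hij (hemb_inj this)
    exact fin3_contra (c 0) (c 1) (c 2) (c 4) (c 5) (c 6)
      (hedge 0 1 2 (by decide)) (hedge 0 2 4 (by decide)) (hedge 1 2 5 (by decide))
      (hedge 0 4 2 (by decide)) (hedge 2 4 6 (by decide)) (hedge 2 6 4 (by decide))
      (hedge 4 6 2 (by decide)) (hedge 1 5 2 (by decide)) (hedge 2 5 6 (by decide))
      (hedge 5 6 2 (by decide))
end

section
/- Let ℓ ≥ r ≥ 3 be integers and let H be an r-graph. Then H is 𝒦_{ℓ+1}^r-saturated if and only if both of the following hold: (i) every r-set of vertices that spans a clique K_r in the graph ∂_{r−2}H is an edge of H; and (ii) ∂_{r−2}H is K_r-maximal, K_{ℓ+1}-free. -/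
open Finset

/-- The graph `∂_{r-2} H`: two vertices are adjacent iff they are distinct and lie in a
common edge of `H`. -/
def shadowGraph {V : Type*} (H : Finset (Finset V)) : SimpleGraph V where
  Adj u v := u ≠ v ∧ ∃ e ∈ H, u ∈ e ∧ v ∈ e
  symm := by
    constructor
    rintro u v ⟨huv, e, he, hu, hv⟩
    exact ⟨huv.symm, e, he, hv, hu⟩
  loopless := by
    constructor
    rintro u ⟨h, -⟩
    exact h rfl

/-- The number of copies of `K_r` in `G`, i.e. the number of `r`-cliques of `G`. -/
noncomputable def cliqueCount {V : Type*} (G : SimpleGraph V) (r : ℕ) : ℕ :=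
  {s : Finset V | G.IsNClique r s}.ncard

/-- `G` is `K_r`-maximal, `K_{ℓ+1}`-free: `G` is `K_{ℓ+1}`-free and every supergraph of `G`
(on the same vertex set) containing strictly more copies of `K_r` contains a `K_{ℓ+1}`. -/
def KrMaxKlFree {V : Type*} (r ℓ : ℕ) (G : SimpleGraph V) : Prop :=
  G.CliqueFree (ℓ + 1) ∧
    ∀ G' : SimpleGraph V, G ≤ G' → cliqueCount G r < cliqueCount G' r →
      ¬ G'.CliqueFree (ℓ + 1)

/-!
A member of `𝒦_{ℓ+1}^r` in `H` is exactly a `K_{ℓ+1}` in the shadow graph, and adding an `r`-set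
`e` to `H` changes the shadow only by making `e` a clique. Once every `r`-clique of the shadow is an
edge, the non-edges of `H` are precisely the `r`-sets that become new `r`-cliques of some supergraph
of the shadow, so saturation of `H` and `K_r`-maximality of its shadow say the same thing.
-/

namespace SimpleGraph

variable {V : Type*}

lemma cliqueCount_lt_iff_exists_isNClique [Finite V] {G G' : SimpleGraph V} (h : G ≤ G')
    (r : ℕ) :
    cliqueCount G r < cliqueCount G' r ↔ ∃ s, G'.IsNClique r s ∧ ¬ G.IsNClique r s := by
  have hsub : {s : Finset V | G.IsNClique r s} ⊆ {s | G'.IsNClique r s} :=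
    fun s hs => hs.mono h
  rw [cliqueCount, cliqueCount]
  constructor
  · intro hlt
    by_contra! hall
    exact (Set.ncard_le_ncard hall (Set.toFinite _)).not_gt hlt
  · rintro ⟨s, hs', hs⟩
    exact Set.ncard_lt_ncard ((Set.ssubset_iff_of_subset hsub).2 ⟨s, hs', hs⟩) (Set.toFinite _)

end SimpleGraph

section Shadow

variable {V : Type*} {H : Finset (Finset V)}

lemma containsKFam_iff_not_cliqueFree (ℓ : ℕ) :
    ContainsKFam H ℓ ↔ ¬ (shadowGraph H).CliqueFree (ℓ + 1) := by
  simp only [ContainsKFam, SimpleGraph.CliqueFree, not_forall, not_not]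
  refine exists_congr fun S => ⟨fun ⟨hS, h⟩ => ⟨fun u hu v hv huv => ⟨huv, h u hu v hv huv⟩, hS⟩,
    fun ⟨h, hS⟩ => ⟨hS, fun u hu v hv huv => (h hu hv huv).2⟩⟩

lemma shadowGraph_le_iff {G : SimpleGraph V} :
    shadowGraph H ≤ G ↔ ∀ e ∈ H, G.IsClique (e : Set V) := by
  constructor
  · exact fun h e he u hu v hv huv => h ⟨huv, e, he, hu, hv⟩
  · rintro h u v ⟨huv, e, he, hu, hv⟩
    exact h e he hu hv huv

lemma isClique_shadowGraph_of_mem {e : Finset V} (he : e ∈ H) :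
    (shadowGraph H).IsClique (e : Set V) :=
  shadowGraph_le_iff.1 le_rfl e he

lemma shadowGraph_insert_le_iff [DecidableEq V] {e : Finset V} {G : SimpleGraph V} :
    shadowGraph (insert e H) ≤ G ↔ G.IsClique (e : Set V) ∧ shadowGraph H ≤ G := by
  simp only [shadowGraph_le_iff, Finset.forall_mem_insert]

lemma shadowGraph_le_shadowGraph_insert [DecidableEq V] (e : Finset V) :
    shadowGraph H ≤ shadowGraph (insert e H) :=
  (shadowGraph_insert_le_iff.1 le_rfl).2

lemma isNClique_shadowGraph_insert [DecidableEq V] {e : Finset V} {r : ℕ} (he : e.card = r) :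
    (shadowGraph (insert e H)).IsNClique r e :=
  ⟨isClique_shadowGraph_of_mem (Finset.mem_insert_self e H), he⟩

lemma not_cliqueFree_of_containsKFam_insert [DecidableEq V] {e : Finset V} {G : SimpleGraph V}
    {ℓ : ℕ} (hH : shadowGraph H ≤ G) (he : G.IsClique (e : Set V))
    (hK : ContainsKFam (insert e H) ℓ) : ¬ G.CliqueFree (ℓ + 1) :=
  fun hG => (containsKFam_iff_not_cliqueFree ℓ).1 hK
    (hG.anti (shadowGraph_insert_le_iff.2 ⟨he, hH⟩))

end Shadow

theorem saturated_iff_shadow_maximal_general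
    (ℓ r n : ℕ) (H : Finset (Finset (Fin n))) :
    KFamSaturated H r ℓ ↔
      ((∀ s : Finset (Fin n), (shadowGraph H).IsNClique r s → s ∈ H) ∧
        KrMaxKlFree r ℓ (shadowGraph H)) := by
  have hfree_iff : KFamFree H ℓ ↔ (shadowGraph H).CliqueFree (ℓ + 1) :=
    not_iff_comm.1 (containsKFam_iff_not_cliqueFree ℓ).symm
  constructor
  · rintro ⟨hfree, hsat⟩
    have hG := hfree_iff.1 hfree
    refine ⟨fun s hs => ?_, hG, fun G' hle hlt => ?_⟩
    · by_contra hsH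
      exact not_cliqueFree_of_containsKFam_insert le_rfl hs.1 (hsat s hs.2 hsH) hG
    · obtain ⟨s, hs', hs⟩ := (SimpleGraph.cliqueCount_lt_iff_exists_isNClique hle r).1 hlt
      have hsH : s ∉ H := fun h => hs ⟨isClique_shadowGraph_of_mem h, hs'.2⟩
      exact not_cliqueFree_of_containsKFam_insert hle hs'.1 (hsat s hs'.2 hsH)
  · rintro ⟨hcl, hG, hmax⟩
    refine ⟨hfree_iff.2 hG, fun e he heH => (containsKFam_iff_not_cliqueFree ℓ).2 ?_⟩
    refine hmax _ (shadowGraph_le_shadowGraph_insert e) ?_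
    exact (SimpleGraph.cliqueCount_lt_iff_exists_isNClique
      (shadowGraph_le_shadowGraph_insert e) r).2
      ⟨e, isNClique_shadowGraph_insert he, fun h => heH (hcl e h)⟩

/-- Lemma 2.5: `H` is `𝒦_{ℓ+1}^r`-saturated iff every `r`-clique of the
shadow graph is an edge of `H` and the shadow graph is `K_r`-maximal, `K_{ℓ+1}`-free. -/
theorem saturated_iff_shadow_maximal
    (ℓ r n : ℕ) (hr : 3 ≤ r) (hℓr : r ≤ ℓ) (H : Finset (Finset (Fin n)))
    (hcard : ∀ e ∈ H, e.card = r) :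
    KFamSaturated H r ℓ ↔
      ((∀ s : Finset (Fin n), (shadowGraph H).IsNClique r s → s ∈ H) ∧
        KrMaxKlFree r ℓ (shadowGraph H)) :=
  saturated_iff_shadow_maximal_general ℓ r n H
end

section
/- Let ℓ ≥ 2 be an integer, η ≥ 0 a real number, and let G be an ℓ-partite graph on n′ vertices with vertex classes V₁,…,V_ℓ and minimum degree δ(G) ≥ ((ℓ−1)/ℓ − η)·n′. Then for every i ∈ {1,…,ℓ}, | |V_i| − n′/ℓ | ≤ √η · n′. -/
open Finset

/-- Claim 3.3(a): part sizes of a large-minimum-degree `ℓ`-partite graph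
are close to `n'/ℓ`. -/
theorem part_sizes_balanced
    (ℓ : ℕ) (hℓ : 2 ≤ ℓ) (η : ℝ) (hη : 0 ≤ η) (n' : ℕ)
    (G : SimpleGraph (Fin n')) (P : Fin ℓ → Finset (Fin n'))
    (hdisj : ∀ i j, i ≠ j → Disjoint (P i) (P j))
    (hcover : ∀ x : Fin n', ∃ i, x ∈ P i)
    (hpart : ∀ i, ∀ u ∈ P i, ∀ v ∈ P i, ¬ G.Adj u v)
    (hdeg : ∀ v : Fin n',
      (((ℓ : ℝ) - 1) / (ℓ : ℝ) - η) * (n' : ℝ) ≤ ({w | G.Adj v w}.ncard : ℝ)) :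
    ∀ i, |((P i).card : ℝ) - (n' : ℝ) / (ℓ : ℝ)| ≤ Real.sqrt η * (n' : ℝ) := by
  classical
  intro i
  set N : ℝ := (n' : ℝ) with hN
  set L : ℝ := (ℓ : ℝ) with hL
  have hL2 : (2 : ℝ) ≤ L := by rw [hL]; exact_mod_cast hℓ
  have hLpos : (0 : ℝ) < L := by linarith
  have hN0 : (0 : ℝ) ≤ N := Nat.cast_nonneg _
  set c : Fin ℓ → ℝ := fun j => ((P j).card : ℝ) with hc
  set D : ℝ := ((L - 1) / L - η) * N with hD
  -- the parts cover everything
  have hunion : Finset.univ.biUnion P = Finset.univ := by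
    apply Finset.eq_univ_of_forall
    intro x
    obtain ⟨j, hj⟩ := hcover x
    exact Finset.mem_biUnion.2 ⟨j, Finset.mem_univ _, hj⟩
  have hsumcard : ∑ j, (P j).card = n' := by
    rw [← Finset.card_biUnion (fun a _ b _ hab => hdisj a b hab), hunion,
      Finset.card_univ, Fintype.card_fin]
  have hsum : ∑ j, c j = N := by
    rw [hN, ← hsumcard]
    push_cast
    rfl
  -- key per-class inequality
  have hkey : ∀ j, c j * D ≤ c j * (N - c j) := by
    intro j
    rcases (P j).eq_empty_or_nonempty with he | ⟨v, hv⟩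
    · simp [hc, he]
    · have h1 : D ≤ ({w | G.Adj v w}.ncard : ℝ) := hdeg v
      have h2 : {w | G.Adj v w} ⊆ (↑((P j)ᶜ) : Set (Fin n')) := by
        intro w hw
        simp only [Finset.coe_compl, Set.mem_compl_iff, Finset.mem_coe]
        intro hwP
        exact hpart j v hv w hwP hw
      have h3 : {w | G.Adj v w}.ncard ≤ ((P j)ᶜ).card := by
        calc {w | G.Adj v w}.ncard
            ≤ (↑((P j)ᶜ) : Set (Fin n')).ncard :=
              Set.ncard_le_ncard h2 ((P j)ᶜ : Finset (Fin n')).finite_toSet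
          _ = ((P j)ᶜ).card := Set.ncard_coe_finset _
      have hle : (P j).card ≤ n' := by
        have := Finset.card_le_univ (P j)
        simpa using this
      have h4 : (((P j)ᶜ).card : ℝ) = N - c j := by
        rw [Finset.card_compl, Fintype.card_fin, Nat.cast_sub hle]
      have h5 : D ≤ N - c j := by
        rw [← h4]
        exact h1.trans (by exact_mod_cast h3)
      have hc0 : (0 : ℝ) ≤ c j := Nat.cast_nonneg _
      nlinarith [h5, hc0]
  -- sum the key inequality
  set S : ℝ := ∑ j, (c j) ^ 2 with hS
  have hsum1 : ∑ j, c j * D = N * D := by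
    rw [← Finset.sum_mul, hsum]
  have hsum2 : ∑ j, c j * (N - c j) = N * N - S := by
    rw [hS, ← hsum]
    rw [Finset.sum_mul, ← Finset.sum_sub_distrib]
    apply Finset.sum_congr rfl
    intros x _
    ring
  have hSbound : S ≤ (1 / L + η) * N ^ 2 := by
    have h := Finset.sum_le_sum (fun j (_ : j ∈ Finset.univ) => hkey j)
    rw [hsum1, hsum2] at h
    have : N * D = ((L - 1) / L - η) * N ^ 2 := by rw [hD]; ring
    rw [this] at h
    have hexp : ((L - 1) / L - η) * N ^ 2 + (1 / L + η) * N ^ 2 = N * N := by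
      field_simp
      ring
    linarith
  -- expand the sum of squared deviations
  have hT : ∑ j, (c j - N / L) ^ 2 = S - N ^ 2 / L := by
    have hconst : L * (N / L) ^ 2 = ∑ _j : Fin ℓ, (N / L) ^ 2 := by
      rw [Finset.sum_const, Finset.card_univ, Fintype.card_fin, nsmul_eq_mul, hL]
    calc ∑ j, (c j - N / L) ^ 2
        = ∑ j, ((c j) ^ 2 - 2 * (N / L) * c j + (N / L) ^ 2) := by
          apply Finset.sum_congr rfl; intros; ring
      _ = S - 2 * (N / L) * (∑ j, c j) + L * (N / L) ^ 2 := by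
          rw [Finset.sum_add_distrib, Finset.sum_sub_distrib, Finset.mul_sum, hconst, hS]
      _ = S - 2 * (N / L) * N + L * (N / L) ^ 2 := by rw [hsum]
      _ = S - N ^ 2 / L := by field_simp; ring
  have hTbound : ∑ j, (c j - N / L) ^ 2 ≤ η * N ^ 2 := by
    rw [hT]
    have : (1 / L + η) * N ^ 2 - N ^ 2 / L = η * N ^ 2 := by field_simp; ring
    linarith
  have hsingle : (c i - N / L) ^ 2 ≤ η * N ^ 2 := by
    have := Finset.single_le_sum (f := fun j => (c j - N / L) ^ 2)
      (fun j _ => sq_nonneg _) (Finset.mem_univ i)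
    linarith
  have habs : |c i - N / L| ≤ Real.sqrt η * N := by
    have h := Real.sqrt_le_sqrt hsingle
    rwa [Real.sqrt_sq_eq_abs, Real.sqrt_mul hη, Real.sqrt_sq hN0] at h
  exact habs
end

section
/- Let ℓ ≥ r ≥ 3 be integers and set η = 1/(10⁵·ℓ³·(3r−4)³). Let G be an ℓ-partite graph on n′ ≥ 2ℓ vertices with vertex classes V₁,…,V_ℓ and minimum degree δ(G) ≥ ((ℓ−1)/ℓ − η)·n′. Then for all 1 ≤ i < j ≤ ℓ and all non-adjacent vertices x_i ∈ V_i and x_j ∈ V_j, the common neighbourhood N(x_i) ∩ N(x_j) contains a clique on r−2 vertices. -/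
open Finset

/-- Claim 3.4: common neighbourhoods of cross non-edges contain a
`K_{r-2}`. -/
theorem common_neighbourhood_clique
    (ℓ r : ℕ) (hr : 3 ≤ r) (hℓr : r ≤ ℓ) (η : ℝ)
    (hη : η = 1 / (10 ^ 5 * (ℓ : ℝ) ^ 3 * (3 * (r : ℝ) - 4) ^ 3))
    (n' : ℕ) (hn' : 2 * ℓ ≤ n')
    (G : SimpleGraph (Fin n')) (P : Fin ℓ → Finset (Fin n'))
    (hdisj : ∀ i j, i ≠ j → Disjoint (P i) (P j))
    (hcover : ∀ x : Fin n', ∃ i, x ∈ P i)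
    (hpart : ∀ i, ∀ u ∈ P i, ∀ v ∈ P i, ¬ G.Adj u v)
    (hdeg : ∀ v : Fin n',
      (((ℓ : ℝ) - 1) / (ℓ : ℝ) - η) * (n' : ℝ) ≤ ({w | G.Adj v w}.ncard : ℝ))
    (i j : Fin ℓ) (hij : i ≠ j) (x y : Fin n') (hx : x ∈ P i) (hy : y ∈ P j)
    (hxy : ¬ G.Adj x y) :
    ∃ s : Finset (Fin n'), G.IsNClique (r - 2) s ∧ ∀ z ∈ s, G.Adj x z ∧ G.Adj y z := by
  classical
  have hℓ3 : 3 ≤ ℓ := le_trans hr hℓr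
  have hLpos : (0:ℝ) < (ℓ:ℝ) := by positivity
  have hL3 : (3:ℝ) ≤ (ℓ:ℝ) := by exact_mod_cast hℓ3
  have hR3 : (3:ℝ) ≤ (r:ℝ) := by exact_mod_cast hr
  have hn'pos : 0 < n' := by omega
  have hNpos : (0:ℝ) < (n':ℝ) := by exact_mod_cast hn'pos
  have hηpos : 0 < η := by
    have h34 : (0:ℝ) < 3*(r:ℝ)-4 := by linarith
    rw [hη]; positivity
  -- the key numeric inequality
  have key : ((ℓ:ℝ) - 1) * (1 / (ℓ:ℝ) + η) < 1 := by
    have h34 : (0:ℝ) < 3*(r:ℝ)-4 := by linarith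
    have hD : (0:ℝ) < 10 ^ 5 * (ℓ:ℝ) ^ 3 * (3 * (r:ℝ) - 4) ^ 3 := by positivity
    have hcube : (125:ℝ) ≤ (3*(r:ℝ)-4)^3 := by nlinarith [sq_nonneg (3*(r:ℝ)-4), h34, hR3]
    have hlt : ((ℓ:ℝ)-1) * (ℓ:ℝ) < 1 * (10 ^ 5 * (ℓ:ℝ) ^ 3 * (3 * (r:ℝ) - 4) ^ 3) := by
      nlinarith [pow_pos hLpos 3, sq_nonneg ((ℓ:ℝ))]
    have e2 : ((ℓ:ℝ)-1) * η < 1/(ℓ:ℝ) := by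
      rw [hη, mul_one_div, div_lt_div_iff₀ hD hLpos]
      exact hlt
    have e1 : ((ℓ:ℝ)-1) * (1/(ℓ:ℝ)) = 1 - 1/(ℓ:ℝ) := by field_simp
    rw [mul_add, e1]
    linarith
  -- non-neighbourhood bound, in Finset form
  have hbad : ∀ v : Fin n',
      (((univ.filter (fun w => ¬ G.Adj v w)).card : ℝ)) ≤ (1 / (ℓ:ℝ) + η) * n' := by
    intro v
    have hsplit := Finset.card_filter_add_card_filter_not
      (s := (univ : Finset (Fin n'))) (p := fun w => G.Adj v w)
    have hcardn : (univ : Finset (Fin n')).card = n' := by simp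
    have hset : ({w | G.Adj v w} : Set (Fin n')).ncard
        = (univ.filter (fun w => G.Adj v w)).card := by
      rw [Set.ncard_eq_toFinset_card']
      congr 1
      ext w; simp
    have hd := hdeg v
    rw [hset] at hd
    have : ((univ.filter (fun w => ¬ G.Adj v w)).card : ℝ)
        = (n' : ℝ) - ((univ.filter (fun w => G.Adj v w)).card : ℝ) := by
      have : (univ.filter (fun w => G.Adj v w)).card
          + (univ.filter (fun w => ¬ G.Adj v w)).card = n' := by
        rw [hcardn] at hsplit; exact hsplit
      push_cast [← this]; ring
    rw [this]
    have : (1 / (ℓ:ℝ) + η) * n' = (n':ℝ) - (((ℓ:ℝ) - 1) / (ℓ:ℝ) - η) * n' := by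
      field_simp; ring
    rw [this]
    linarith
  -- greedy construction
  suffices h : ∀ k : ℕ, k ≤ r - 2 →
      ∃ s : Finset (Fin n'), G.IsNClique k s ∧ ∀ z ∈ s, G.Adj x z ∧ G.Adj y z from
    h (r - 2) le_rfl
  intro k hk
  induction k with
  | zero =>
    exact ⟨∅, by simp [SimpleGraph.isNClique_empty], by simp⟩
  | succ k ih =>
    obtain ⟨s, hs, hadj⟩ := ih (le_trans (Nat.le_succ k) hk)
    set F : Finset (Fin n') := insert x (insert y s) with hF
    have hFcard : F.card ≤ k + 2 := by
      calc F.card ≤ (insert y s).card + 1 := Finset.card_insert_le _ _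
        _ ≤ (s.card + 1) + 1 := by
            have := Finset.card_insert_le y s; omega
        _ = k + 2 := by rw [hs.card_eq]
    set Bad : Finset (Fin n') := F.biUnion (fun v => univ.filter (fun w => ¬ G.Adj v w))
      with hBad
    have hBadcard : (Bad.card : ℝ) < (n' : ℝ) := by
      have h1 : (Bad.card : ℝ) ≤ ∑ v ∈ F, ((univ.filter (fun w => ¬ G.Adj v w)).card : ℝ) := by
        exact_mod_cast Finset.card_biUnion_le
      have h2 : ∑ v ∈ F, ((univ.filter (fun w => ¬ G.Adj v w)).card : ℝ)
          ≤ (F.card : ℝ) * ((1 / (ℓ:ℝ) + η) * n') := by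
        calc ∑ v ∈ F, ((univ.filter (fun w => ¬ G.Adj v w)).card : ℝ)
            ≤ ∑ _v ∈ F, (1 / (ℓ:ℝ) + η) * (n':ℝ) := Finset.sum_le_sum (fun v _ => hbad v)
          _ = (F.card : ℝ) * ((1 / (ℓ:ℝ) + η) * n') := by
              rw [Finset.sum_const, nsmul_eq_mul]
      have h3 : (F.card : ℝ) ≤ (ℓ:ℝ) - 1 := by
        have : F.card ≤ ℓ - 1 := by omega
        have h4 : ((ℓ - 1 : ℕ) : ℝ) = (ℓ:ℝ) - 1 := by
          push_cast [Nat.cast_sub (by omega : 1 ≤ ℓ)]; ring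
        calc (F.card : ℝ) ≤ ((ℓ - 1 : ℕ) : ℝ) := by exact_mod_cast this
          _ = (ℓ:ℝ) - 1 := h4
      have h5 : (0:ℝ) ≤ (1 / (ℓ:ℝ) + η) * n' := by positivity
      calc (Bad.card : ℝ) ≤ (F.card : ℝ) * ((1 / (ℓ:ℝ) + η) * n') := le_trans h1 h2
        _ ≤ ((ℓ:ℝ) - 1) * ((1 / (ℓ:ℝ) + η) * n') := by
            apply mul_le_mul_of_nonneg_right h3 h5
        _ = (((ℓ:ℝ) - 1) * (1 / (ℓ:ℝ) + η)) * n' := by ring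
        _ < 1 * n' := by
            apply mul_lt_mul_of_pos_right key hNpos
        _ = (n' : ℝ) := one_mul _
    have hne : (univ \ Bad).Nonempty := by
      rw [← Finset.card_pos, Finset.card_sdiff_of_subset (Finset.subset_univ _)]
      have : Bad.card < n' := by exact_mod_cast hBadcard
      simp only [Finset.card_univ, Fintype.card_fin]
      omega
    obtain ⟨w, hw⟩ := hne
    rw [Finset.mem_sdiff] at hw
    have hwadj : ∀ v ∈ F, G.Adj v w := by
      intro v hv
      by_contra hcon
      exact hw.2 (Finset.mem_biUnion.mpr ⟨v, hv, by simpa using hcon⟩)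
    have hwx : G.Adj x w := hwadj x (by simp [hF])
    have hwy : G.Adj y w := hwadj y (by simp [hF])
    have hws : ∀ b ∈ s, G.Adj w b := fun b hb => (hwadj b (by simp [hF, hb])).symm
    refine ⟨insert w s, hs.insert hws, ?_⟩
    intro z hz
    rcases Finset.mem_insert.mp hz with h | h
    · subst h; exact ⟨hwx, hwy⟩
    · exact hadj z h
end

section
/- Let ℓ ≥ r ≥ 3 be integers and set η = 1/(10⁵·ℓ³·(3r−4)³). Let G be a K_r-maximal, K_{ℓ+1}-free graph on n ≥ 2ℓ vertices which is ℓ-partite with vertex classes V₁,…,V_ℓ and has minimum degree δ(G) ≥ ((ℓ−1)/ℓ − η)·n. Then G is complete ℓ-partite, i.e. every pair of vertices lying in distinct classes is adjacent. -/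
open Finset

/-! If `u ∈ V_i` and `v ∈ V_j` with `i ≠ j` were non-adjacent, put `G' = G + uv`. Every vertex
has at most `(1/ℓ + η) n` non-neighbours and `(r - 1)(1/ℓ + η) < 1`, so any `r - 1` vertices have
a common neighbour; extending `{u, v}` greedily gives an `r`-clique of `G'` that is not a clique of
`G`. But the classes `V_k` still colour `G'` properly, so `G'` is `K_{ℓ+1}`-free, contradicting
maximality. -/

open Function

namespace SimpleGraph

variable {V : Type*} {G : SimpleGraph V}

theorem colorable_of_forall_mem_not_adj {ι : Type*} [Fintype ι] (P : ι → Set V)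
    (hcover : ∀ x, ∃ i, x ∈ P i) (hpart : ∀ i, ∀ u ∈ P i, ∀ v ∈ P i, ¬ G.Adj u v) :
    G.Colorable (Fintype.card ι) := by
  choose c hc using hcover
  exact (Coloring.mk c fun {v w} hvw hcvw => hpart _ v (hc v) w (hcvw ▸ hc w) hvw).colorable

theorem sup_edge_forall_mem_not_adj {ι : Type*} {P : ι → Set V}
    (hdisj : Pairwise (Disjoint on P)) (hpart : ∀ i, ∀ u ∈ P i, ∀ v ∈ P i, ¬ G.Adj u v)
    {i j : ι} (hij : i ≠ j) {u v : V} (hu : u ∈ P i) (hv : v ∈ P j) :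
    ∀ k, ∀ a ∈ P k, ∀ b ∈ P k, ¬ (G ⊔ edge u v).Adj a b := by
  have hclass : ∀ {x k l}, x ∈ P k → x ∈ P l → k = l := fun hk hl =>
    by_contra fun hkl => Set.disjoint_left.mp (hdisj hkl) hk hl
  intro k a ha b hb hab
  rw [sup_adj, edge_adj] at hab
  rcases hab with hab | ⟨⟨rfl, rfl⟩ | ⟨rfl, rfl⟩, -⟩
  · exact hpart k a ha b hb hab
  · exact hij ((hclass hu ha).trans (hclass hb hv))
  · exact hij ((hclass hu hb).trans (hclass ha hv))

theorem exists_isNClique_superset [DecidableEq V] {m : ℕ}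
    (h : ∀ S : Finset V, S.card ≤ m → ∃ z, ∀ x ∈ S, G.Adj x z)
    {k : ℕ} {s : Finset V} (hs : G.IsNClique k s) (hk : k ≤ m + 1) :
    ∃ t, s ⊆ t ∧ G.IsNClique (m + 1) t := by
  induction hd : m + 1 - k generalizing k s with
  | zero => exact ⟨s, subset_rfl, by rwa [show m + 1 = k by omega]⟩
  | succ d ih =>
    obtain ⟨z, hz⟩ := h s (by rw [hs.card_eq]; omega)
    have hzs : z ∉ s := fun hzs => G.irrefl (hz z hzs)
    obtain ⟨t, hst, ht⟩ := ih (hs.insert fun b hb => (hz b hb).symm) (by omega) (by omega)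
    exact ⟨t, (subset_insert z s).trans hst, ht⟩

theorem exists_forall_adj_of_sum_lt [Fintype V] [DecidableRel G.Adj] (S : Finset V)
    (hS : ∑ x ∈ S, (Fintype.card V - G.degree x) < Fintype.card V) :
    ∃ z, ∀ x ∈ S, G.Adj x z := by
  classical
  have hcard : (S.biUnion fun x => (G.neighborFinset x)ᶜ).card < (univ : Finset V).card := by
    calc (S.biUnion fun x => (G.neighborFinset x)ᶜ).card
        ≤ ∑ x ∈ S, (G.neighborFinset x)ᶜ.card := card_biUnion_le
      _ = ∑ x ∈ S, (Fintype.card V - G.degree x) := by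
        simp only [card_compl, card_neighborFinset_eq_degree]
      _ < (univ : Finset V).card := by rwa [card_univ]
  obtain ⟨z, -, hz⟩ := exists_mem_notMem_of_card_lt_card hcard
  refine ⟨z, fun x hx => ?_⟩
  by_contra hxz
  exact hz (mem_biUnion.mpr ⟨x, hx, by simpa using hxz⟩)

theorem exists_forall_adj_of_card_le [Fintype V] [Nonempty V] [DecidableRel G.Adj] {ε : ℝ}
    (hdeg : ∀ v, (1 - ε) * Fintype.card V ≤ G.degree v) {m : ℕ} (hm : m * ε < 1)
    (S : Finset V) (hS : S.card ≤ m) : ∃ z, ∀ x ∈ S, G.Adj x z := by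
  refine exists_forall_adj_of_sum_lt S ?_
  have hpos : (0 : ℝ) < Fintype.card V := by exact_mod_cast Fintype.card_pos
  have hSε : S.card * ε < 1 := by
    rcases le_or_gt 0 ε with hε | hε
    · exact (mul_le_mul_of_nonneg_right (by exact_mod_cast hS) hε).trans_lt hm
    · exact (mul_nonpos_of_nonneg_of_nonpos (Nat.cast_nonneg _) hε.le).trans_lt one_pos
  have hnonnbr : ∀ x, ((Fintype.card V - G.degree x : ℕ) : ℝ) ≤ ε * Fintype.card V := fun x => by
    rw [Nat.cast_sub (G.degree_lt_card_verts x).le]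
    linarith [hdeg x]
  have : ((∑ x ∈ S, (Fintype.card V - G.degree x) : ℕ) : ℝ) < Fintype.card V :=
    calc ((∑ x ∈ S, (Fintype.card V - G.degree x) : ℕ) : ℝ)
        ≤ S.card * (ε * Fintype.card V) := by
          push_cast [← nsmul_eq_mul]
          exact sum_le_card_nsmul _ _ _ fun x _ => by exact_mod_cast hnonnbr x
      _ < Fintype.card V := by nlinarith
  exact_mod_cast this

theorem isNClique_pair_sup_edge [DecidableEq V] {u v : V} (huv : u ≠ v) :
    (G ⊔ edge u v).IsNClique 2 {u, v} := by
  refine ⟨?_, card_pair huv⟩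
  rw [coe_pair, isClique_pair]
  exact fun _ => Or.inr ((edge_adj ..).mpr ⟨Or.inl ⟨rfl, rfl⟩, huv⟩)

theorem cliqueCount_lt_cliqueCount [Finite V] {G' : SimpleGraph V} (hle : G ≤ G') {r : ℕ}
    {s : Finset V} (hs' : G'.IsNClique r s) (hs : ¬ G.IsNClique r s) :
    cliqueCount G r < cliqueCount G' r :=
  Set.ncard_lt_ncard ⟨fun _ ht => ht.mono hle, fun hsub => hs (hsub hs')⟩ (Set.toFinite _)

end SimpleGraph

theorem sub_one_mul_inv_add_lt_one {r ℓ η : ℝ} (hr : 1 ≤ r) (hrℓ : r ≤ ℓ) (hη : 0 ≤ η)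
    (hηℓ : η * ℓ ^ 2 < 1) : (r - 1) * (1 / ℓ + η) < 1 := by
  have hℓ : 0 < ℓ := by linarith
  have : (r - 1) * η < 1 / ℓ := by
    rw [lt_div_iff₀ hℓ]
    nlinarith [mul_le_mul_of_nonneg_right (show r - 1 ≤ ℓ by linarith) (mul_nonneg hη hℓ.le)]
  calc (r - 1) * (1 / ℓ + η) = (r - 1) / ℓ + (r - 1) * η := by ring
    _ < (ℓ - 1) / ℓ + 1 / ℓ := add_lt_add_of_le_of_lt (by gcongr) this
    _ = 1 := by field_simp; ring

theorem natCast_sub_one_mul_inv_add_inv_lt_one {ℓ r : ℕ} (hr : 2 ≤ r) (hℓr : r ≤ ℓ) :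
    ((r - 1 : ℕ) : ℝ) * (1 / ℓ + 1 / (10 ^ 5 * (ℓ : ℝ) ^ 3 * (3 * (r : ℝ) - 4) ^ 3)) < 1 := by
  have hr' : (2 : ℝ) ≤ r := by exact_mod_cast hr
  have hℓ : (2 : ℝ) ≤ ℓ := by exact_mod_cast hr.trans hℓr
  have h3r : (2 : ℝ) ≤ 3 * r - 4 := by linarith
  have hD : 0 < 10 ^ 5 * (ℓ : ℝ) ^ 3 * (3 * (r : ℝ) - 4) ^ 3 :=
    mul_pos (by positivity) (pow_pos (by linarith) 3)
  rw [Nat.cast_sub (by omega), Nat.cast_one]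
  refine sub_one_mul_inv_add_lt_one (by linarith) (by exact_mod_cast hℓr) (by positivity) ?_
  rw [one_div_mul_eq_div, div_lt_one hD]
  nlinarith [pow_le_pow_left₀ (by norm_num) h3r 3, pow_le_pow_left₀ (by norm_num) hℓ 3]

open SimpleGraph in
theorem krMaximal_partite_complete_general
    (ℓ r : ℕ) (hr : 3 ≤ r) (hℓr : r ≤ ℓ) (η : ℝ)
    (hη : η = 1 / (10 ^ 5 * (ℓ : ℝ) ^ 3 * (3 * (r : ℝ) - 4) ^ 3))
    (n : ℕ)
    (G : SimpleGraph (Fin n)) (hmax : KrMaxKlFree r ℓ G)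
    (P : Fin ℓ → Finset (Fin n))
    (hdisj : ∀ i j, i ≠ j → Disjoint (P i) (P j))
    (hcover : ∀ x : Fin n, ∃ i, x ∈ P i)
    (hpart : ∀ i, ∀ u ∈ P i, ∀ v ∈ P i, ¬ G.Adj u v)
    (hdeg : ∀ v : Fin n,
      (((ℓ : ℝ) - 1) / (ℓ : ℝ) - η) * (n : ℝ) ≤ ({w | G.Adj v w}.ncard : ℝ)) :
    ∀ i j, i ≠ j → ∀ u ∈ P i, ∀ v ∈ P j, G.Adj u v := by
  classical
  intro i j hij u hu v hv
  by_contra huv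
  have : Nonempty (Fin n) := ⟨u⟩
  have hne : u ≠ v := fun h => disjoint_left.mp (hdisj i j hij) hu (h ▸ hv)
  have hmindeg : ∀ x, (1 - (1 / ℓ + η)) * Fintype.card (Fin n) ≤ G.degree x := fun x => by
    have : (1 - (1 / ℓ + η) : ℝ) = (ℓ - 1) / ℓ - η := by
      have : (ℓ : ℝ) ≠ 0 := by exact_mod_cast (by omega : ℓ ≠ 0)
      field_simp; ring
    rw [this, Fintype.card_fin, ← card_neighborFinset_eq_degree, ← Set.ncard_coe_finset,
      coe_neighborFinset]
    exact hdeg x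
  set G' := G ⊔ edge u v
  have hcommon (S : Finset (Fin n)) (hS : S.card ≤ r - 1) : ∃ z, ∀ x ∈ S, G'.Adj x z :=
    (exists_forall_adj_of_card_le hmindeg (hη ▸ natCast_sub_one_mul_inv_add_inv_lt_one (by omega) hℓr)
      S hS).imp fun z hz x hx => Or.inl (hz x hx)
  obtain ⟨s, huvs, hs⟩ := exists_isNClique_superset hcommon (isNClique_pair_sup_edge hne) (by omega)
  rw [Nat.sub_add_cancel (by omega)] at hs
  have hnew : ¬ G.IsNClique r s := fun h =>
    huv (h.1 (huvs (mem_insert_self u _)) (huvs (by simp)) hne)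
  refine hmax.2 G' le_sup_left (cliqueCount_lt_cliqueCount le_sup_left hs hnew) ?_
  have hpart' := sup_edge_forall_mem_not_adj (P := fun k => (P k : Set (Fin n)))
    (fun k l hkl => disjoint_coe.mpr (hdisj k l hkl)) hpart hij hu hv
  simpa using (colorable_of_forall_mem_not_adj _ (by simpa using hcover) hpart').cliqueFree
    (m := ℓ + 1) (by simp)

/-- cf. Claim 3.5: a `K_r`-maximal, `K_{ℓ+1}`-free, `ℓ`-partite graph of
large minimum degree is complete `ℓ`-partite. -/
theorem krMaximal_partite_complete
    (ℓ r : ℕ) (hr : 3 ≤ r) (hℓr : r ≤ ℓ) (η : ℝ)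
    (hη : η = 1 / (10 ^ 5 * (ℓ : ℝ) ^ 3 * (3 * (r : ℝ) - 4) ^ 3))
    (n : ℕ) (hn : 2 * ℓ ≤ n)
    (G : SimpleGraph (Fin n)) (hmax : KrMaxKlFree r ℓ G)
    (P : Fin ℓ → Finset (Fin n))
    (hdisj : ∀ i j, i ≠ j → Disjoint (P i) (P j))
    (hcover : ∀ x : Fin n, ∃ i, x ∈ P i)
    (hpart : ∀ i, ∀ u ∈ P i, ∀ v ∈ P i, ¬ G.Adj u v)
    (hdeg : ∀ v : Fin n,
      (((ℓ : ℝ) - 1) / (ℓ : ℝ) - η) * (n : ℝ) ≤ ({w | G.Adj v w}.ncard : ℝ)) :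
    ∀ i j, i ≠ j → ∀ u ∈ P i, ∀ v ∈ P j, G.Adj u v :=
  krMaximal_partite_complete_general ℓ r hr hℓr η hη n G hmax P hdisj hcover hpart hdeg
end

section
/- Let ℓ ≥ r ≥ 3 be integers, set η = 1/(10⁵·ℓ³·(3r−4)³), and let ε ≥ 0 be real. Let G be a K_{ℓ+1}-free graph on n vertices with e(G) ≥ t_2(n,ℓ) − ε·n². Suppose v₁,…,v_t are distinct vertices of G such that for each i ∈ {1,…,t} the degree of v_i in the induced subgraph G − {v₁,…,v_{i−1}} is less than ((ℓ−1)/ℓ − η)·(n−i+1), and suppose the graph G′ = G − {v₁,…,v_t} is ℓ-partite with vertex classes V₁,…,V_ℓ. Then the number of pairs {x,y} with x ∈ V_i, y ∈ V_j for some i ≠ j and x not adjacent to y in G′ is at most 10⁶·ℓ³·(3r−4)³·ε·n². -/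
/-!
Edges of `G` joining two surviving vertices are cross pairs, since the classes are independent;
every other edge is charged to the first removed vertex `v i` on it. The degree bound on `v i`
says it accounts for at most `k - ⌊k/ℓ⌋` edges, where `k = n - i - 1`, which is exactly
`t₂(k + 1, ℓ) - t₂(k, ℓ)`; summing, the removed vertices carry at most `t₂(n, ℓ) - t₂(n - t, ℓ)`
edges. The complete `ℓ`-partite graph on the classes has at most `t₂(n - t, ℓ)` edges by Turán's
theorem, so the number of missing cross pairs is at most `t₂(n, ℓ) - e(G) ≤ ε n²`.
-/

open Finset Function

/-- `turanEdges r n ℓ` is the number of edges of `T_r(n,ℓ)`, the complete `ℓ`-partite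
`r`-graph on `n` vertices with balanced parts (vertex `x` lies in part `x % ℓ`):
its edges are the `r`-sets meeting each part in at most one vertex. -/
def turanEdges (r n ℓ : ℕ) : ℕ :=
  ((Finset.univ : Finset (Finset (Fin n))).filter
    (fun e => e.card = r ∧ ∀ x ∈ e, ∀ y ∈ e, x.val % ℓ = y.val % ℓ → x = y)).card

theorem Nat.card_filter_range_mod_ne {ℓ : ℕ} (hℓ : 0 < ℓ) (b : ℕ) :
    #{a ∈ range b | a % ℓ ≠ b % ℓ} = b - b / ℓ := by
  have hcount : #{a ∈ range b | a % ℓ = b % ℓ} = b / ℓ := by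
    have := Nat.count_modEq_card b hℓ b
    rwa [Nat.count_eq_card_filter_range, if_neg (lt_irrefl _), add_zero] at this
  rw [filter_not, card_sdiff_of_subset (filter_subset _ _), hcount, card_range]

namespace SimpleGraph

variable {V ι : Type*}

def crossGraph (P : ι → Finset V) : SimpleGraph V where
  Adj x y := x ≠ y ∧ ∃ i j, i ≠ j ∧ x ∈ P i ∧ y ∈ P j
  symm := ⟨fun _ _ ⟨hxy, i, j, hij, hx, hy⟩ => ⟨hxy.symm, j, i, hij.symm, hy, hx⟩⟩
  loopless := ⟨fun _ h => h.1 rfl⟩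

instance [Fintype ι] [DecidableEq ι] [DecidableEq V] (P : ι → Finset V) :
    DecidableRel (crossGraph P).Adj :=
  fun _ _ => inferInstanceAs (Decidable (_ ∧ _))

theorem crossGraph_colorable [Fintype ι] [Nonempty ι] {P : ι → Finset V}
    (hP : Pairwise (Disjoint on P)) : (crossGraph P).Colorable (Fintype.card ι) := by
  classical
  have hpart : ∀ {x i j}, x ∈ P i → x ∈ P j → i = j := fun hi hj =>
    by_contra fun hij => Finset.disjoint_left.1 (hP hij) hi hj
  let color x : ι := if h : ∃ i, x ∈ P i then h.choose else Classical.arbitrary ι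
  have hcolor : ∀ {x i}, x ∈ P i → color x = i := fun {x i} hx => by
    have h : ∃ i, x ∈ P i := ⟨i, hx⟩
    simpa [color, h] using hpart h.choose_spec hx
  refine (Coloring.mk color fun {x y} hxy => ?_).colorable
  obtain ⟨_, i, j, hij, hx, hy⟩ := hxy
  rwa [hcolor hx, hcolor hy]

section Finite

variable [Fintype V]

theorem card_filter_lt_adj [LinearOrder V] (G : SimpleGraph V) [DecidableRel G.Adj] :
    #{p : V × V | p.1 < p.2 ∧ G.Adj p.1 p.2} = #G.edgeFinset := by
  refine card_bij (fun p _ => s(p.1, p.2)) (fun p hp => by simpa using (mem_filter.1 hp).2.2)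
    ?_ ?_
  · rintro ⟨a, b⟩ hab ⟨c, d⟩ hcd h
    simp only [mem_filter, mem_univ, true_and] at hab hcd
    rcases Sym2.eq_iff.1 h with ⟨rfl, rfl⟩ | ⟨rfl, rfl⟩
    · rfl
    · exact absurd (hab.1.trans hcd.1) (lt_irrefl _)
  · intro e he
    induction e using Sym2.ind with
    | h a b =>
      rw [mem_edgeFinset, mem_edgeSet] at he
      rcases lt_or_gt_of_ne he.ne with hab | hba
      · exact ⟨(a, b), by simp [hab, he], rfl⟩
      · exact ⟨(b, a), by simp [hba, he.symm], Sym2.eq_swap⟩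

theorem ncard_crossPairs_not_adj [LinearOrder V] [Fintype ι] [DecidableEq ι] (P : ι → Finset V)
    (G : SimpleGraph V) [DecidableRel G.Adj] :
    {p : V × V | p.1 < p.2 ∧ (∃ i j, i ≠ j ∧ p.1 ∈ P i ∧ p.2 ∈ P j) ∧ ¬ G.Adj p.1 p.2}.ncard =
      #(crossGraph P \ G).edgeFinset := by
  convert card_filter_lt_adj (crossGraph P \ G) using 1
  · rw [← Set.ncard_coe_finset]
    congr 1
    ext p
    simp only [coe_filter, mem_univ, true_and, Set.mem_ofPred_eq, sdiff_adj, crossGraph]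
    exact ⟨fun ⟨hlt, hP, hG⟩ => ⟨hlt, ⟨hlt.ne, hP⟩, hG⟩,
      fun ⟨hlt, ⟨_, hP⟩, hG⟩ => ⟨hlt, hP, hG⟩⟩
  · congr!

theorem CliqueFree.card_edgeFinset_le_of_support_subset {H : SimpleGraph V}
    [DecidableRel H.Adj] {r : ℕ} (hH : H.CliqueFree (r + 1)) {s : Finset V} (hs : H.support ⊆ s) :
    #H.edgeFinset ≤ #(turanGraph #s r).edgeFinset := by
  classical
  rw [← card_edgeFinset_induce_of_support_subset hs, card_edgeFinset_turanGraph]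
  convert (hH.comap (Embedding.induce (s : Set V)).isContained).card_edgeFinset_le using 1
  · congr!
  · simp

variable [DecidableEq V]

theorem card_edgeFinset_crossGraph_le [Fintype ι] [DecidableEq ι] [Nonempty ι] {P : ι → Finset V}
    (hP : Pairwise (Disjoint on P)) {s : Finset V} (hs : ∀ i, P i ⊆ s) :
    #(crossGraph P).edgeFinset ≤ #(turanGraph #s (Fintype.card ι)).edgeFinset := by
  have hfree := (crossGraph_colorable hP).cliqueFree (Nat.lt_succ_self _)
  refine hfree.card_edgeFinset_le_of_support_subset ?_
  rintro x ⟨y, -, i, -, -, hx, -⟩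
  exact hs i hx

theorem card_edgeFinset_le_card_filter_add_sum (G : SimpleGraph V) [DecidableRel G.Adj]
    [Fintype ι] [LinearOrder ι] (v : ι → V) :
    #G.edgeFinset ≤ #{e ∈ G.edgeFinset | ∀ j, v j ∉ e} +
      ∑ i, {w | G.Adj (v i) w ∧ ∀ j < i, w ≠ v j}.ncard := by
  have hcover : G.edgeFinset ⊆ {e ∈ G.edgeFinset | ∀ j, v j ∉ e} ∪
      univ.biUnion fun i =>
        ({w | G.Adj (v i) w ∧ ∀ j < i, w ≠ v j} : Finset V).image (s(v i, ·)) := by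
    intro e he
    by_cases hkept : ∀ j, v j ∉ e
    · exact mem_union_left _ (mem_filter.2 ⟨he, hkept⟩)
    obtain ⟨j, hj⟩ := not_forall_not.1 hkept
    -- charge `e` to the first `v i` lying on it
    obtain ⟨i, hi, hfirst⟩ := exists_min_image {j | v j ∈ e} id ⟨j, by simpa using hj⟩
    rw [mem_filter] at hi
    have he' : s(v i, Sym2.Mem.other hi.2) = e := Sym2.other_spec hi.2
    refine mem_union_right _ (mem_biUnion.2 ⟨i, mem_univ _, mem_image.2 ⟨_, ?_, he'⟩⟩)
    rw [← he', mem_edgeFinset, mem_edgeSet] at he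
    refine mem_filter.2 ⟨mem_univ _, he, fun k hki hk => ?_⟩
    rw [← he'] at hfirst
    exact (hfirst k (mem_filter.2 ⟨mem_univ _, hk ▸ Sym2.mem_mk_right _ _⟩)).not_gt hki
  calc #G.edgeFinset ≤ _ := card_le_card hcover
    _ ≤ _ := (card_union_le _ _).trans <| add_le_add_right (card_biUnion_le.trans <|
        sum_le_sum fun i _ => card_image_le.trans_eq <| by rw [← Set.ncard_coe_finset]; simp) _

theorem card_edgeFinset_sdiff_add_card_edgeFinset_le (G H : SimpleGraph V) [DecidableRel G.Adj]
    [DecidableRel H.Adj] [Fintype ι] [LinearOrder ι] (v : ι → V)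
    (hGH : ∀ x y, G.Adj x y → (∀ j, x ≠ v j) → (∀ j, y ≠ v j) → H.Adj x y) :
    #(H \ G).edgeFinset + #G.edgeFinset ≤
      #H.edgeFinset + ∑ i, {w | G.Adj (v i) w ∧ ∀ j < i, w ≠ v j}.ncard := by
  have hkept : {e ∈ G.edgeFinset | ∀ j, v j ∉ e} ⊆ H.edgeFinset ∩ G.edgeFinset := by
    intro e he
    induction e using Sym2.ind with
    | h x y =>
      simp only [mem_filter, mem_edgeFinset, mem_edgeSet, Sym2.mem_iff, not_or] at he
      simp only [mem_inter, mem_edgeFinset, mem_edgeSet]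
      exact ⟨hGH x y he.1 (fun j => Ne.symm (he.2 j).1) (fun j => Ne.symm (he.2 j).2), he.1⟩
  have hsplit := card_sdiff_add_card_inter H.edgeFinset G.edgeFinset
  have hpeel := G.card_edgeFinset_le_card_filter_add_sum v
  rw [edgeFinset_sdiff]
  have := card_le_card hkept
  omega

end Finite

theorem card_edgeFinset_turanGraph_eq_sum {ℓ : ℕ} (hℓ : 0 < ℓ) (k : ℕ) :
    #(turanGraph k ℓ).edgeFinset = ∑ b ∈ range k, (b - b / ℓ) := by
  -- count each edge at its larger endpoint `b`, which has `b - b / ℓ` smaller neighbours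
  rw [← card_filter_lt_adj, card_filter, Fintype.sum_prod_type_right]
  simp_rw [← card_filter, turanGraph_adj]
  rw [← Fin.sum_univ_eq_sum_range]
  refine sum_congr rfl fun b _ => ?_
  rw [← Nat.card_filter_range_mod_ne hℓ, ← card_map Fin.valEmbedding]
  congr 1
  ext a
  simp only [mem_map, mem_filter, mem_univ, true_and, mem_range, Fin.valEmbedding_apply]
  constructor
  · rintro ⟨a, ⟨hab, hne⟩, rfl⟩
    exact ⟨hab, hne⟩
  · rintro ⟨hab, hne⟩
    exact ⟨⟨a, hab.trans b.2⟩, ⟨hab, hne⟩, rfl⟩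

theorem turanEdges_two_eq_card_edgeFinset (n ℓ : ℕ) :
    turanEdges 2 n ℓ = #(turanGraph n ℓ).edgeFinset := by
  symm
  refine card_bij (fun e _ => e.toFinset) (fun e he => ?_) (fun e₁ _ e₂ _ h => ?_)
    fun s hs => ?_
  · induction e using Sym2.ind with
    | h a b =>
      rw [mem_edgeFinset, mem_edgeSet, turanGraph_adj] at he
      simp only [Sym2.toFinset_mk_eq, mem_filter, mem_univ, true_and, mem_insert, mem_singleton]
      refine ⟨card_pair fun hab => he (hab ▸ rfl), ?_⟩
      rintro x (rfl | rfl) y (rfl | rfl) hxy <;>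
        first | rfl | exact absurd hxy he | exact absurd hxy.symm he
  · exact Sym2.ext fun x => by rw [← Sym2.mem_toFinset, h, Sym2.mem_toFinset]
  · rw [mem_filter] at hs
    obtain ⟨a, b, hab, rfl⟩ := card_eq_two.1 hs.2.1
    refine ⟨s(a, b), ?_, Sym2.toFinset_mk_eq⟩
    rw [mem_edgeFinset, mem_edgeSet, turanGraph_adj]
    exact fun h => hab (hs.2.2 a (by simp) b (by simp) h)

theorem add_card_edgeFinset_turanGraph_le_succ {ℓ : ℕ} (hℓ : 0 < ℓ) {d k : ℕ}
    (hd : (d : ℝ) < (ℓ - 1) / ℓ * (k + 1)) :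
    d + #(turanGraph k ℓ).edgeFinset ≤ #(turanGraph (k + 1) ℓ).edgeFinset := by
  rw [card_edgeFinset_turanGraph_eq_sum hℓ, card_edgeFinset_turanGraph_eq_sum hℓ, sum_range_succ]
  suffices d + k / ℓ < k + 1 by omega
  have hℓ' : (0 : ℝ) < ℓ := by exact_mod_cast hℓ
  have hdiv : ((k / ℓ : ℕ) : ℝ) ≤ k / ℓ := Nat.cast_div_le
  have hexpand : (ℓ - 1) / ℓ * (k + 1 : ℝ) = k + 1 - k / ℓ - 1 / ℓ := by field_simp; ring
  have : (0 : ℝ) < 1 / ℓ := by positivity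
  exact_mod_cast (by linarith : (d : ℝ) + (k / ℓ : ℕ) < k + 1)

theorem sum_add_card_edgeFinset_turanGraph_le {ℓ : ℕ} (hℓ : 0 < ℓ) {n t : ℕ} (htn : t ≤ n)
    (d : Fin t → ℕ) (hd : ∀ i, (d i : ℝ) < (ℓ - 1) / ℓ * (n - (i : ℕ))) :
    ∑ i, d i + #(turanGraph (n - t) ℓ).edgeFinset ≤ #(turanGraph n ℓ).edgeFinset := by
  induction t with
  | zero => simp
  | succ t ih =>
    have hprev := ih (by omega) (d ∘ Fin.castSucc) fun i => by simpa using hd i.castSucc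
    have hlast := add_card_edgeFinset_turanGraph_le_succ hℓ (k := n - (t + 1))
      (d := d (Fin.last t)) (by convert hd (Fin.last t) using 2; push_cast [Nat.cast_sub htn]; ring)
    rw [show n - (t + 1) + 1 = n - t by omega] at hlast
    rw [Fin.sum_univ_castSucc]
    simp only [Function.comp_apply] at hprev
    omega

theorem card_edgeFinset_crossGraph_sdiff_add_card_edgeFinset_le {n ℓ t : ℕ} (hℓ : 0 < ℓ)
    (G : SimpleGraph (Fin n)) [DecidableRel G.Adj] (v : Fin t → Fin n) (hv : Injective v)
    (hdeg : ∀ i, ({w | G.Adj (v i) w ∧ ∀ j < i, w ≠ v j}.ncard : ℝ) < (ℓ - 1) / ℓ * (n - (i : ℕ)))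
    {P : Fin ℓ → Finset (Fin n)} (hdisj : Pairwise (Disjoint on P))
    (hPsub : ∀ i, ∀ x ∈ P i, ∀ j, x ≠ v j) (hcover : ∀ x, (∀ j, x ≠ v j) → ∃ i, x ∈ P i)
    (hpart : ∀ i, ∀ x ∈ P i, ∀ y ∈ P i, ¬ G.Adj x y) :
    #(crossGraph P \ G).edgeFinset + #G.edgeFinset ≤ #(turanGraph n ℓ).edgeFinset := by
  have : Nonempty (Fin ℓ) := ⟨⟨0, hℓ⟩⟩
  have htn : t ≤ n := by simpa using Fintype.card_le_of_injective v hv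
  have hcount := card_edgeFinset_sdiff_add_card_edgeFinset_le G (crossGraph P) v
    fun x y hxy hx hy => by
      obtain ⟨i, hxi⟩ := hcover x hx
      obtain ⟨j, hyj⟩ := hcover y hy
      exact ⟨G.ne_of_adj hxy, i, j, fun hij => hpart i x hxi y (hij ▸ hyj) hxy, hxi, hyj⟩
  have hturan : #(crossGraph P).edgeFinset ≤ #(turanGraph (n - t) ℓ).edgeFinset := by
    have := card_edgeFinset_crossGraph_le hdisj (s := (univ.image v)ᶜ)
      fun i x hx => by simpa [eq_comm] using hPsub i x hx
    rwa [card_compl, card_image_of_injective _ hv, card_univ, Fintype.card_fin, Fintype.card_fin,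
      Fintype.card_fin] at this
  have hdegrees := sum_add_card_edgeFinset_turanGraph_le hℓ htn _ hdeg
  exact hcount.trans <| (add_le_add_left hturan _).trans <| (add_comm _ _).trans_le hdegrees

end SimpleGraph

open SimpleGraph in
theorem few_missing_cross_pairs_general
    (ℓ r : ℕ) (hr : 3 ≤ r) (hℓr : r ≤ ℓ) (η ε : ℝ)
    (hη : η = 1 / (10 ^ 5 * (ℓ : ℝ) ^ 3 * (3 * (r : ℝ) - 4) ^ 3)) (hε : 0 ≤ ε)
    (n : ℕ) (G : SimpleGraph (Fin n))
    (hedge : (turanEdges 2 n ℓ : ℝ) - ε * (n : ℝ) ^ 2 ≤ (G.edgeSet.ncard : ℝ))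
    (t : ℕ) (v : Fin t → Fin n) (hv : Function.Injective v)
    (hdeg : ∀ i : Fin t,
      ({w | G.Adj (v i) w ∧ ∀ j : Fin t, (j : ℕ) < (i : ℕ) → w ≠ v j}.ncard : ℝ) <
        (((ℓ : ℝ) - 1) / (ℓ : ℝ) - η) * ((n : ℝ) - (i : ℕ)))
    (P : Fin ℓ → Finset (Fin n))
    (hdisj : ∀ i j, i ≠ j → Disjoint (P i) (P j))
    (hPsub : ∀ i, ∀ x ∈ P i, ∀ j : Fin t, x ≠ v j)
    (hcover : ∀ x : Fin n, (∀ j : Fin t, x ≠ v j) → ∃ i, x ∈ P i)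
    (hpart : ∀ i, ∀ u ∈ P i, ∀ w ∈ P i, ¬ G.Adj u w) :
    ({p : Fin n × Fin n | p.1 < p.2 ∧
        (∃ i j, i ≠ j ∧ p.1 ∈ P i ∧ p.2 ∈ P j) ∧ ¬ G.Adj p.1 p.2}.ncard : ℝ) ≤
      10 ^ 6 * (ℓ : ℝ) ^ 3 * (3 * (r : ℝ) - 4) ^ 3 * ε * (n : ℝ) ^ 2 := by
  classical
  have hℓ : 0 < ℓ := by omega
  have htn : t ≤ n := by simpa using Fintype.card_le_of_injective v hv
  have hr' : (3 : ℝ) ≤ r := by exact_mod_cast hr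
  have hℓr' : (r : ℝ) ≤ ℓ := by exact_mod_cast hℓr
  have hη0 : 0 ≤ η := by
    have : (0 : ℝ) < 3 * r - 4 := by linarith
    rw [hη]
    positivity
  have hmissing := card_edgeFinset_crossGraph_sdiff_add_card_edgeFinset_le hℓ G v hv
    (fun i => (hdeg i).trans_le <| mul_le_mul_of_nonneg_right (by linarith) <|
      sub_nonneg.2 <| by exact_mod_cast i.2.le.trans htn)
    (fun i j => hdisj i j) hPsub hcover hpart
  have hcoef : (1 : ℝ) ≤ 10 ^ 6 * ℓ ^ 3 * (3 * r - 4) ^ 3 := by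
    have hℓ1 : (1 : ℝ) ≤ ℓ ^ 3 := one_le_pow₀ (by linarith)
    have hr1 : (1 : ℝ) ≤ (3 * r - 4) ^ 3 := one_le_pow₀ (by linarith)
    nlinarith
  rw [turanEdges_two_eq_card_edgeFinset, ← coe_edgeFinset, Set.ncard_coe_finset] at hedge
  rw [ncard_crossPairs_not_adj]
  calc (#(crossGraph P \ G).edgeFinset : ℝ) ≤ ε * n ^ 2 := by
        have : (#(crossGraph P \ G).edgeFinset : ℝ) + #G.edgeFinset ≤
            #(turanGraph n ℓ).edgeFinset := by exact_mod_cast hmissing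
        linarith
    _ ≤ 10 ^ 6 * ℓ ^ 3 * (3 * r - 4) ^ 3 * (ε * n ^ 2) :=
        le_mul_of_one_le_left (by positivity) hcoef
    _ = _ := by ring

/-- Claim 3.6: the remaining `ℓ`-partite graph misses few cross pairs. -/
theorem few_missing_cross_pairs
    (ℓ r : ℕ) (hr : 3 ≤ r) (hℓr : r ≤ ℓ) (η ε : ℝ)
    (hη : η = 1 / (10 ^ 5 * (ℓ : ℝ) ^ 3 * (3 * (r : ℝ) - 4) ^ 3)) (hε : 0 ≤ ε)
    (n : ℕ) (G : SimpleGraph (Fin n)) (hfree : G.CliqueFree (ℓ + 1))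
    (hedge : (turanEdges 2 n ℓ : ℝ) - ε * (n : ℝ) ^ 2 ≤ (G.edgeSet.ncard : ℝ))
    (t : ℕ) (v : Fin t → Fin n) (hv : Function.Injective v)
    (hdeg : ∀ i : Fin t,
      ({w | G.Adj (v i) w ∧ ∀ j : Fin t, (j : ℕ) < (i : ℕ) → w ≠ v j}.ncard : ℝ) <
        (((ℓ : ℝ) - 1) / (ℓ : ℝ) - η) * ((n : ℝ) - (i : ℕ)))
    (P : Fin ℓ → Finset (Fin n))
    (hdisj : ∀ i j, i ≠ j → Disjoint (P i) (P j))
    (hPsub : ∀ i, ∀ x ∈ P i, ∀ j : Fin t, x ≠ v j)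
    (hcover : ∀ x : Fin n, (∀ j : Fin t, x ≠ v j) → ∃ i, x ∈ P i)
    (hpart : ∀ i, ∀ u ∈ P i, ∀ w ∈ P i, ¬ G.Adj u w) :
    ({p : Fin n × Fin n | p.1 < p.2 ∧
        (∃ i j, i ≠ j ∧ p.1 ∈ P i ∧ p.2 ∈ P j) ∧ ¬ G.Adj p.1 p.2}.ncard : ℝ) ≤
      10 ^ 6 * (ℓ : ℝ) ^ 3 * (3 * (r : ℝ) - 4) ^ 3 * ε * (n : ℝ) ^ 2 :=
  few_missing_cross_pairs_general ℓ r hr hℓr η ε hη hε n G hedge t v hv hdeg P hdisj hPsub hcover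
    hpart
end

section
/- Let ℓ ≥ 3 be an integer and let G be a K_{ℓ+1}-free graph containing a 5-wheel-like subgraph. Among all 5-wheel-like subgraphs W_{ℓ,k′} of G (over all 0 ≤ k′ ≤ ℓ−2), choose one, W, of minimum order s; say W is a copy of W_{ℓ,k} (so s = 2ℓ−k+1) with cliques Q₁, Q₂ intersecting in the k-set R. Let X be the set of all vertices of G adjacent to every vertex of R (so X = V(G) when R = ∅). Then every vertex w ∈ X is adjacent (in G) to at most s−3 vertices of V(W)∖{w}. -/
open Finset

/-- A copy of the `5`-wheel-like graph `W_{ℓ,k}` in `G`: two cliques `Q₁`, `Q₂` of order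
`ℓ-1` intersecting in exactly `k` vertices (`0 ≤ k ≤ ℓ-2`), a vertex `v` adjacent to all of
`Q₁ ∪ Q₂`, and an edge `u₁u₂` with `u₁` adjacent to all of `Q₁` and `u₂` adjacent to all of
`Q₂`, where `v, u₁, u₂` are distinct vertices outside `Q₁ ∪ Q₂`. -/
def IsFiveWheelLike {V : Type*} [DecidableEq V] (G : SimpleGraph V) (ℓ k : ℕ)
    (v u₁ u₂ : V) (Q₁ Q₂ : Finset V) : Prop :=
  k + 2 ≤ ℓ ∧
  G.IsClique ↑Q₁ ∧ Q₁.card = ℓ - 1 ∧ G.IsClique ↑Q₂ ∧ Q₂.card = ℓ - 1 ∧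
  (Q₁ ∩ Q₂).card = k ∧
  v ∉ Q₁ ∪ Q₂ ∧ u₁ ∉ Q₁ ∪ Q₂ ∧ u₂ ∉ Q₁ ∪ Q₂ ∧
  v ≠ u₁ ∧ v ≠ u₂ ∧ u₁ ≠ u₂ ∧
  (∀ x ∈ Q₁ ∪ Q₂, G.Adj v x) ∧ G.Adj u₁ u₂ ∧
  (∀ x ∈ Q₁, G.Adj u₁ x) ∧ (∀ x ∈ Q₂, G.Adj u₂ x)

/-- Claim 4.1: in a `K_{ℓ+1}`-free graph, relative to a minimum-order
`5`-wheel-like subgraph `W` with hub intersection `R = Q₁ ∩ Q₂`, every vertex adjacent to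
all of `R` has at most `s - 3` neighbours in `V(W) \ {w}`, where `s = 2ℓ - k + 1`. -/
theorem wheel_like_neighbour_bound
    (ℓ : ℕ) (hℓ : 3 ≤ ℓ) (n : ℕ) (G : SimpleGraph (Fin n))
    (hfree : G.CliqueFree (ℓ + 1))
    (k : ℕ) (v u₁ u₂ : Fin n) (Q₁ Q₂ : Finset (Fin n))
    (hW : IsFiveWheelLike G ℓ k v u₁ u₂ Q₁ Q₂)
    (hmin : ∀ (k' : ℕ) (v' u₁' u₂' : Fin n) (Q₁' Q₂' : Finset (Fin n)),
      IsFiveWheelLike G ℓ k' v' u₁' u₂' Q₁' Q₂' → k' ≤ k) :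
    ∀ w : Fin n, (∀ x ∈ Q₁ ∩ Q₂, G.Adj w x) →
      {x | x ∈ (Q₁ ∪ Q₂ ∪ {v, u₁, u₂} : Finset (Fin n)) ∧ x ≠ w ∧ G.Adj w x}.ncard ≤
        2 * ℓ - k - 2 := by
  classical
  obtain ⟨hk, hQ1c, hQ1, hQ2c, hQ2, hR, hv, hu1, hu2, hvu1, hvu2, hu12, hav, ha12, ha1, ha2⟩ := hW
  intro w hwR
  set T : Finset (Fin n) := Q₁ ∪ Q₂ ∪ {v, u₁, u₂} with hTdef
  have hsubQ1 : Q₁ ⊆ T := fun x hx => by simp [hTdef, hx]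
  have hsubQ2 : Q₂ ⊆ T := fun x hx => by simp [hTdef, hx]
  have hvT : v ∈ T := by simp [hTdef]
  have hu1T : u₁ ∈ T := by simp [hTdef]
  have hu2T : u₂ ∈ T := by simp [hTdef]
  have hvQ1 : v ∉ Q₁ := fun h => hv (mem_union_left _ h)
  have hvQ2 : v ∉ Q₂ := fun h => hv (mem_union_right _ h)
  have hu1Q1 : u₁ ∉ Q₁ := fun h => hu1 (mem_union_left _ h)
  have hu1Q2 : u₁ ∉ Q₂ := fun h => hu1 (mem_union_right _ h)
  have hu2Q1 : u₂ ∉ Q₁ := fun h => hu2 (mem_union_left _ h)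
  have hu2Q2 : u₂ ∉ Q₂ := fun h => hu2 (mem_union_right _ h)
  have hwR' : w ∉ Q₁ ∩ Q₂ := fun h => G.irrefl (hwR w h)
  -- cardinality of T
  have hTcard : T.card + k = 2 * ℓ + 1 := by
    have h1 : (Q₁ ∪ Q₂).card + (Q₁ ∩ Q₂).card = Q₁.card + Q₂.card :=
      card_union_add_card_inter _ _
    have hdisj : Disjoint (Q₁ ∪ Q₂) ({v, u₁, u₂} : Finset (Fin n)) := by
      rw [disjoint_right]
      intro x hx
      simp only [mem_insert, mem_singleton] at hx
      rcases hx with rfl | rfl | rfl <;> assumption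
    have h3 : ({v, u₁, u₂} : Finset (Fin n)).card = 3 := by
      rw [card_insert_of_notMem (by simp [hvu1, hvu2]),
        card_insert_of_notMem (by simp [hu12]), card_singleton]
    have h2 : T.card = (Q₁ ∪ Q₂).card + 3 := by
      rw [hTdef, card_union_of_disjoint hdisj, h3]
    omega
  -- rewrite the goal as a Finset card
  have hgoalset : {x | x ∈ T ∧ x ≠ w ∧ G.Adj w x} = ↑(T.filter fun x => G.Adj w x) := by
    ext x
    simp only [Set.mem_setOf_eq, coe_filter, Set.mem_setOf_eq]
    exact ⟨fun ⟨h1, _, h3⟩ => ⟨h1, h3⟩, fun ⟨h1, h3⟩ => ⟨h1, h3.ne.symm, h3⟩⟩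
  rw [hgoalset, Set.ncard_coe_finset]
  by_contra hcon
  push_neg at hcon
  set M : Finset (Fin n) := T.filter fun x => ¬ G.Adj w x with hMdef
  have hMA : (T.filter fun x => G.Adj w x).card + M.card = T.card :=
    card_filter_add_card_filter_not _
  have hM2 : M.card ≤ 2 := by omega
  have hMR : ∀ x ∈ M, x ∉ Q₁ ∩ Q₂ := fun x hx hxR => (mem_filter.1 hx).2 (hwR x hxR)
  -- every ℓ-clique inside T meets M
  have key : ∀ K : Finset (Fin n), G.IsClique ↑K → K.card = ℓ → K ⊆ T →
      ∃ x ∈ K, x ∈ M := by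
    intro K hc hcard hsub
    by_cases hwK : w ∈ K
    · exact ⟨w, hwK, mem_filter.2 ⟨hsub hwK, fun h => G.irrefl h⟩⟩
    · by_contra hcon2
      push_neg at hcon2
      refine hfree (insert w K) ⟨?_, ?_⟩
      · rw [coe_insert]
        refine hc.insert fun x hx _ => ?_
        by_contra hna
        exact hcon2 x (mem_coe.1 hx) (mem_filter.2 ⟨hsub (mem_coe.1 hx), hna⟩)
      · rw [card_insert_of_notMem hwK, hcard]
  -- the four ℓ-cliques of the wheel
  have hC1 : G.IsClique ↑(insert v Q₁) := by
    rw [coe_insert]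
    exact hQ1c.insert fun x hx _ => hav x (mem_union_left _ (mem_coe.1 hx))
  have hC2 : G.IsClique ↑(insert v Q₂) := by
    rw [coe_insert]
    exact hQ2c.insert fun x hx _ => hav x (mem_union_right _ (mem_coe.1 hx))
  have hD1 : G.IsClique ↑(insert u₁ Q₁) := by
    rw [coe_insert]
    exact hQ1c.insert fun x hx _ => ha1 x (mem_coe.1 hx)
  have hD2 : G.IsClique ↑(insert u₂ Q₂) := by
    rw [coe_insert]
    exact hQ2c.insert fun x hx _ => ha2 x (mem_coe.1 hx)
  have hC1card : (insert v Q₁).card = ℓ := by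
    rw [card_insert_of_notMem hvQ1, hQ1]; omega
  have hC2card : (insert v Q₂).card = ℓ := by
    rw [card_insert_of_notMem hvQ2, hQ2]; omega
  have hD1card : (insert u₁ Q₁).card = ℓ := by
    rw [card_insert_of_notMem hu1Q1, hQ1]; omega
  have hD2card : (insert u₂ Q₂).card = ℓ := by
    rw [card_insert_of_notMem hu2Q2, hQ2]; omega
  obtain ⟨a₁, ha₁D, ha₁M⟩ := key (insert u₁ Q₁) hD1 hD1card
    (insert_subset_iff.2 ⟨hu1T, hsubQ1⟩)
  obtain ⟨a₂, ha₂D, ha₂M⟩ := key (insert u₂ Q₂) hD2 hD2card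
    (insert_subset_iff.2 ⟨hu2T, hsubQ2⟩)
  have hne : a₁ ≠ a₂ := by
    rintro rfl
    rcases mem_insert.1 ha₁D with rfl | h1
    · rcases mem_insert.1 ha₂D with h | h
      · exact hu12 h
      · exact hu1Q2 h
    · rcases mem_insert.1 ha₂D with rfl | h2
      · exact hu2Q1 h1
      · exact hMR _ ha₁M (mem_inter.2 ⟨h1, h2⟩)
  have hMeq : M = {a₁, a₂} := by
    refine (eq_of_subset_of_card_le ?_ ?_).symm
    · intro x hx
      simp only [mem_insert, mem_singleton] at hx
      rcases hx with rfl | rfl <;> assumption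
    · rw [card_insert_of_notMem (by simp [hne]), card_singleton]
      exact hM2
  -- locate a₁ in Q₁ \ R and a₂ in Q₂ \ R
  have ha₁Q₁ : a₁ ∈ Q₁ := by
    obtain ⟨c, hcC, hcM⟩ := key (insert v Q₁) hC1 hC1card
      (insert_subset_iff.2 ⟨hvT, hsubQ1⟩)
    have hcM' : c = a₁ ∨ c = a₂ := by
      rw [hMeq] at hcM; simpa using hcM
    rcases hcM' with rfl | rfl
    · rcases mem_insert.1 hcC with rfl | h
      · rcases mem_insert.1 ha₁D with h' | h'
        · exact absurd h' hvu1
        · exact absurd h' hvQ1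
      · exact h
    · exfalso
      rcases mem_insert.1 hcC with rfl | h
      · rcases mem_insert.1 ha₂D with h' | h'
        · exact hvu2 h'
        · exact hvQ2 h'
      · rcases mem_insert.1 ha₂D with rfl | h'
        · exact hu2Q1 h
        · exact hMR _ ha₂M (mem_inter.2 ⟨h, h'⟩)
  have ha₂Q₂ : a₂ ∈ Q₂ := by
    obtain ⟨c, hcC, hcM⟩ := key (insert v Q₂) hC2 hC2card
      (insert_subset_iff.2 ⟨hvT, hsubQ2⟩)
    have hcM' : c = a₁ ∨ c = a₂ := by
      rw [hMeq] at hcM; simpa using hcM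
    rcases hcM' with rfl | rfl
    · exfalso
      rcases mem_insert.1 hcC with rfl | h
      · rcases mem_insert.1 ha₁D with h' | h'
        · exact hvu1 h'
        · exact hvQ1 h'
      · rcases mem_insert.1 ha₁D with rfl | h'
        · exact hu1Q2 h
        · exact hMR _ ha₁M (mem_inter.2 ⟨h', h⟩)
    · rcases mem_insert.1 hcC with rfl | h
      · rcases mem_insert.1 ha₂D with h' | h'
        · exact absurd h' hvu2
        · exact absurd h' hvQ2
      · exact h
  have ha₁Q₂ : a₁ ∉ Q₂ := fun h => hMR _ ha₁M (mem_inter.2 ⟨ha₁Q₁, h⟩)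
  have ha₂Q₁ : a₂ ∉ Q₁ := fun h => hMR _ ha₂M (mem_inter.2 ⟨h, ha₂Q₂⟩)
  -- adjacency of w to everything in T except a₁, a₂
  have hadjW : ∀ x ∈ T, x ≠ a₁ → x ≠ a₂ → G.Adj w x := by
    intro x hx h1 h2
    by_contra hna
    have hxM : x ∈ M := mem_filter.2 ⟨hx, hna⟩
    rw [hMeq] at hxM
    simp only [mem_insert, mem_singleton] at hxM
    tauto
  have hwv : G.Adj w v :=
    hadjW v hvT (fun h => hvQ1 (h ▸ ha₁Q₁)) (fun h => hvQ2 (h ▸ ha₂Q₂))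
  have hwu1 : G.Adj w u₁ :=
    hadjW u₁ hu1T (fun h => hu1Q1 (h ▸ ha₁Q₁)) (fun h => hu1Q2 (h ▸ ha₂Q₂))
  have hwu2 : G.Adj w u₂ :=
    hadjW u₂ hu2T (fun h => hu2Q1 (h ▸ ha₁Q₁)) (fun h => hu2Q2 (h ▸ ha₂Q₂))
  have hwQ1 : ∀ x ∈ Q₁, x ≠ a₁ → G.Adj w x :=
    fun x hx h1 => hadjW x (hsubQ1 hx) h1 (fun h => ha₂Q₁ (h ▸ hx))
  have hwQ2 : ∀ x ∈ Q₂, x ≠ a₂ → G.Adj w x :=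
    fun x hx h2 => hadjW x (hsubQ2 hx) (fun h => ha₁Q₂ (h ▸ hx)) h2
  have hwE1 : w ∉ Q₁.erase a₁ := by
    intro h
    exact G.irrefl (hwQ1 w (mem_of_mem_erase h) (ne_of_mem_erase h))
  have hwE2 : w ∉ Q₂.erase a₂ := by
    intro h
    exact G.irrefl (hwQ2 w (mem_of_mem_erase h) (ne_of_mem_erase h))
  by_cases hk3 : k + 3 ≤ ℓ
  · -- build a wheel with intersection k + 1, contradicting minimality
    set B₁ : Finset (Fin n) := insert w (Q₁.erase a₁) with hB₁def
    set B₂ : Finset (Fin n) := insert w (Q₂.erase a₂) with hB₂def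
    have hBint : B₁ ∩ B₂ = insert w (Q₁ ∩ Q₂) := by
      ext x
      constructor
      · intro hx
        rw [mem_inter] at hx
        obtain ⟨h1, h2⟩ := hx
        rw [hB₁def, mem_insert] at h1
        rw [hB₂def, mem_insert] at h2
        rw [mem_insert]
        rcases h1 with rfl | h1
        · exact Or.inl rfl
        · rcases h2 with rfl | h2
          · exact Or.inl rfl
          · exact Or.inr (mem_inter.2 ⟨mem_of_mem_erase h1, mem_of_mem_erase h2⟩)
      · intro hx
        rw [mem_insert] at hx
        rw [mem_inter, hB₁def, hB₂def, mem_insert, mem_insert]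
        rcases hx with rfl | hx
        · exact ⟨Or.inl rfl, Or.inl rfl⟩
        · have h1 := mem_inter.1 hx
          refine ⟨Or.inr (mem_erase.2 ⟨?_, h1.1⟩), Or.inr (mem_erase.2 ⟨?_, h1.2⟩)⟩
          · rintro rfl; exact ha₁Q₂ h1.2
          · rintro rfl; exact ha₂Q₁ h1.1
    have hwheel : IsFiveWheelLike G ℓ (k + 1) v u₁ u₂ B₁ B₂ := by
      refine ⟨by omega, ?_, ?_, ?_, ?_, ?_, ?_, ?_, ?_, hvu1, hvu2, hu12, ?_, ha12, ?_, ?_⟩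
      · rw [hB₁def, coe_insert]
        refine (hQ1c.subset (coe_subset.2 (erase_subset _ _))).insert fun x hx _ => ?_
        exact hwQ1 x (mem_of_mem_erase (mem_coe.1 hx)) (ne_of_mem_erase (mem_coe.1 hx))
      · rw [hB₁def, card_insert_of_notMem hwE1, card_erase_of_mem ha₁Q₁, hQ1]; omega
      · rw [hB₂def, coe_insert]
        refine (hQ2c.subset (coe_subset.2 (erase_subset _ _))).insert fun x hx _ => ?_
        exact hwQ2 x (mem_of_mem_erase (mem_coe.1 hx)) (ne_of_mem_erase (mem_coe.1 hx))
      · rw [hB₂def, card_insert_of_notMem hwE2, card_erase_of_mem ha₂Q₂, hQ2]; omega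
      · rw [hBint, card_insert_of_notMem hwR', hR]
      · intro h
        rcases mem_union.1 h with h | h <;> rw [mem_insert] at h <;>
          rcases h with rfl | h
        · exact G.irrefl hwv
        · exact hvQ1 (mem_of_mem_erase h)
        · exact G.irrefl hwv
        · exact hvQ2 (mem_of_mem_erase h)
      · intro h
        rcases mem_union.1 h with h | h <;> rw [mem_insert] at h <;>
          rcases h with rfl | h
        · exact G.irrefl hwu1
        · exact hu1Q1 (mem_of_mem_erase h)
        · exact G.irrefl hwu1
        · exact hu1Q2 (mem_of_mem_erase h)
      · intro h
        rcases mem_union.1 h with h | h <;> rw [mem_insert] at h <;>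
          rcases h with rfl | h
        · exact G.irrefl hwu2
        · exact hu2Q1 (mem_of_mem_erase h)
        · exact G.irrefl hwu2
        · exact hu2Q2 (mem_of_mem_erase h)
      · intro x hx
        rcases mem_union.1 hx with h | h <;> rw [mem_insert] at h <;>
          rcases h with rfl | h
        · exact hwv.symm
        · exact hav x (mem_union_left _ (mem_of_mem_erase h))
        · exact hwv.symm
        · exact hav x (mem_union_right _ (mem_of_mem_erase h))
      · intro x hx
        rw [hB₁def, mem_insert] at hx
        rcases hx with rfl | hx
        · exact hwu1.symm
        · exact ha1 x (mem_of_mem_erase hx)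
      · intro x hx
        rw [hB₂def, mem_insert] at hx
        rcases hx with rfl | hx
        · exact hwu2.symm
        · exact ha2 x (mem_of_mem_erase hx)
    have := hmin (k + 1) v u₁ u₂ B₁ B₂ hwheel
    omega
  · -- k = ℓ - 2 : build a K_{ℓ+1} directly
    have hu2R : u₂ ∉ Q₁ ∩ Q₂ := fun h => hu2Q1 (mem_inter.1 h).1
    have hu1in : u₁ ∉ insert u₂ (Q₁ ∩ Q₂) := by
      rw [mem_insert]
      rintro (rfl | h)
      · exact hu12 rfl
      · exact hu1Q1 (mem_inter.1 h).1
    have hwin : w ∉ insert u₁ (insert u₂ (Q₁ ∩ Q₂)) := by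
      rw [mem_insert, mem_insert]
      rintro (rfl | rfl | h)
      · exact G.irrefl hwu1
      · exact G.irrefl hwu2
      · exact hwR' h
    have hRc : G.IsClique ↑(Q₁ ∩ Q₂) :=
      hQ1c.subset (coe_subset.2 inter_subset_left)
    have h1 : G.IsClique ↑(insert u₂ (Q₁ ∩ Q₂)) := by
      rw [coe_insert]
      exact hRc.insert fun x hx _ => ha2 x (mem_inter.1 (mem_coe.1 hx)).2
    have h2 : G.IsClique ↑(insert u₁ (insert u₂ (Q₁ ∩ Q₂))) := by
      rw [coe_insert]
      refine h1.insert fun x hx _ => ?_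
      rw [mem_coe, mem_insert] at hx
      rcases hx with rfl | hx
      · exact ha12
      · exact ha1 x (mem_inter.1 hx).1
    have h3 : G.IsClique ↑(insert w (insert u₁ (insert u₂ (Q₁ ∩ Q₂)))) := by
      rw [coe_insert]
      refine h2.insert fun x hx _ => ?_
      rw [mem_coe, mem_insert, mem_insert] at hx
      rcases hx with rfl | rfl | hx
      · exact hwu1
      · exact hwu2
      · exact hwR x hx
    refine hfree (insert w (insert u₁ (insert u₂ (Q₁ ∩ Q₂)))) ⟨h3, ?_⟩
    rw [card_insert_of_notMem hwin, card_insert_of_notMem hu1in,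
      card_insert_of_notMem hu2R, hR]
    omega
end

section
/- Let G be a graph on n vertices, let t ≥ 0 be a real number, and let R be a set of k ≥ 2 vertices of G such that every two distinct vertices x, y ∈ R have at least t common neighbours. Then the number of vertices adjacent to every vertex of R is at least n − k·(n−t)/2. -/
open Finset

/-- Claim 4.2: if every pair of a `k`-set `R` has at least `t` common
neighbours, then at least `n - k(n-t)/2` vertices are adjacent to all of `R`. -/
theorem common_neighbours_of_set
    (n : ℕ) (G : SimpleGraph (Fin n)) (t : ℝ) (ht : 0 ≤ t)
    (k : ℕ) (hk : 2 ≤ k) (R : Finset (Fin n)) (hR : R.card = k)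
    (hcommon : ∀ x ∈ R, ∀ y ∈ R, x ≠ y →
      t ≤ ({w | G.Adj x w ∧ G.Adj y w}.ncard : ℝ)) :
    (n : ℝ) - (k : ℝ) * ((n : ℝ) - t) / 2 ≤
      ({w : Fin n | ∀ x ∈ R, G.Adj w x}.ncard : ℝ) := by
  classical
  set Bad : Finset (Fin n) := univ.filter (fun w => ∃ x ∈ R, ¬ G.Adj w x) with hBadDef
  set Good : Finset (Fin n) := univ.filter (fun w => ∀ x ∈ R, G.Adj w x) with hGoodDef
  have hcompl : Bad = Goodᶜ := by
    ext w
    simp only [hBadDef, hGoodDef, mem_filter, mem_univ, true_and, mem_compl, not_forall]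
    tauto
  have hsplit : Good.card + Bad.card = n := by
    rw [hcompl]
    have := Finset.card_add_card_compl Good
    simpa using this
  -- per-pair bad set
  set m : Fin n × Fin n → ℕ :=
    fun p => (univ.filter (fun w => ¬ (G.Adj p.1 w ∧ G.Adj p.2 w))).card with hmDef
  -- double counting
  have key : 2 * (k - 1) * Bad.card ≤ ∑ p ∈ R.offDiag, m p := by
    have hrw : ∀ p : Fin n × Fin n,
        m p = ∑ w ∈ univ, if ¬ (G.Adj p.1 w ∧ G.Adj p.2 w) then 1 else 0 := by
      intro p
      rw [hmDef]
      exact Finset.card_filter _ _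
    calc 2 * (k - 1) * Bad.card = ∑ w ∈ Bad, 2 * (k - 1) := by
          rw [Finset.sum_const, smul_eq_mul, mul_comm]
      _ ≤ ∑ w ∈ Bad, ∑ p ∈ R.offDiag, (if ¬ (G.Adj p.1 w ∧ G.Adj p.2 w) then 1 else 0) := by
          apply Finset.sum_le_sum
          intro w hw
          simp only [hBadDef, mem_filter, mem_univ, true_and] at hw
          obtain ⟨x0, hx0R, hx0⟩ := hw
          have : ∑ p ∈ R.offDiag, (if ¬ (G.Adj p.1 w ∧ G.Adj p.2 w) then 1 else 0)
              = (R.offDiag.filter (fun p => ¬ (G.Adj p.1 w ∧ G.Adj p.2 w))).card :=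
            (Finset.card_filter _ _).symm
          rw [this]
          have hsub : ({x0} ×ˢ R.erase x0) ∪ (R.erase x0 ×ˢ {x0}) ⊆
              R.offDiag.filter (fun p => ¬ (G.Adj p.1 w ∧ G.Adj p.2 w)) := by
            intro p hp
            simp only [mem_union, mem_product, mem_singleton, mem_erase] at hp
            simp only [mem_filter, mem_offDiag]
            rcases hp with ⟨h1, h2, h3⟩ | ⟨⟨h2, h3⟩, h1⟩
            · refine ⟨⟨h1 ▸ hx0R, h3, ?_⟩, ?_⟩
              · rw [h1]; exact fun h => h2 (h ▸ rfl)
              · rw [h1]; intro h; exact hx0 (h.1.symm)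
            · refine ⟨⟨h3, h1 ▸ hx0R, ?_⟩, ?_⟩
              · rw [h1]; exact fun h => h2 h
              · rw [h1]; intro h; exact hx0 (h.2.symm)
          have hdisj : Disjoint ({x0} ×ˢ R.erase x0) ((R.erase x0) ×ˢ {x0}) := by
            rw [Finset.disjoint_left]
            intro p hp hp'
            simp only [mem_product, mem_singleton, mem_erase] at hp hp'
            exact hp'.1.1 hp.1
          have hcard : (({x0} ×ˢ R.erase x0) ∪ ((R.erase x0) ×ˢ {x0})).card = 2 * (k - 1) := by
            rw [Finset.card_union_of_disjoint hdisj, Finset.card_product, Finset.card_product]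
            simp [Finset.card_erase_of_mem hx0R, hR]
            ring
          calc 2 * (k - 1) = (({x0} ×ˢ R.erase x0) ∪ ((R.erase x0) ×ˢ {x0})).card := hcard.symm
            _ ≤ _ := Finset.card_le_card hsub
      _ ≤ ∑ w ∈ univ, ∑ p ∈ R.offDiag, (if ¬ (G.Adj p.1 w ∧ G.Adj p.2 w) then 1 else 0) := by
          apply Finset.sum_le_sum_of_subset (Finset.subset_univ _)
      _ = ∑ p ∈ R.offDiag, m p := by
          rw [Finset.sum_comm]
          exact Finset.sum_congr rfl fun p _ => (hrw p).symm
  -- m p ≤ n - t for p ∈ offDiag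
  have hmle : ∀ p ∈ R.offDiag, (m p : ℝ) ≤ n - t := by
    intro p hp
    rw [mem_offDiag] at hp
    obtain ⟨hx, hy, hne⟩ := hp
    have hc := hcommon p.1 hx p.2 hy hne
    have hset : {w | G.Adj p.1 w ∧ G.Adj p.2 w}
        = ↑(univ.filter (fun w => G.Adj p.1 w ∧ G.Adj p.2 w)) := by
      ext w; simp
    rw [hset, Set.ncard_coe_finset] at hc
    have hsum : (univ.filter (fun w => G.Adj p.1 w ∧ G.Adj p.2 w)).card + m p = n := by
      rw [hmDef]
      have := Finset.card_filter_add_card_filter_not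
        (s := (univ : Finset (Fin n))) (p := fun w => G.Adj p.1 w ∧ G.Adj p.2 w)
      simpa using this
    have : (m p : ℝ) = n - (univ.filter (fun w => G.Adj p.1 w ∧ G.Adj p.2 w)).card := by
      have := congrArg (fun x : ℕ => (x : ℝ)) hsum
      push_cast at this
      linarith
    linarith
  have hsumle : (∑ p ∈ R.offDiag, (m p : ℝ)) ≤ (k * (k - 1) : ℝ) * (n - t) := by
    calc (∑ p ∈ R.offDiag, (m p : ℝ)) ≤ ∑ p ∈ R.offDiag, ((n : ℝ) - t) :=
          Finset.sum_le_sum hmle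
      _ = R.offDiag.card * ((n : ℝ) - t) := by rw [Finset.sum_const, nsmul_eq_mul]
      _ = (k * (k - 1) : ℝ) * (n - t) := by
          rw [Finset.offDiag_card, hR]
          congr 1
          have h1 : k ≤ k * k := Nat.le_mul_of_pos_left k (by omega)
          push_cast [Nat.cast_sub h1]
          ring
  -- combine
  have hk1 : (1 : ℝ) ≤ (k : ℝ) - 1 := by
    have : (2 : ℝ) ≤ k := by exact_mod_cast hk
    linarith
  have hkey' : (2 : ℝ) * ((k : ℝ) - 1) * Bad.card ≤ (k : ℝ) * ((k : ℝ) - 1) * (n - t) := by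
    have hc := key
    have : ((2 * (k - 1) * Bad.card : ℕ) : ℝ) ≤ ((∑ p ∈ R.offDiag, m p : ℕ) : ℝ) := by
      exact_mod_cast hc
    push_cast [Nat.cast_sub (by omega : 1 ≤ k)] at this
    calc (2 : ℝ) * ((k : ℝ) - 1) * Bad.card ≤ ∑ p ∈ R.offDiag, (m p : ℝ) := this
      _ ≤ (k * (k - 1) : ℝ) * (n - t) := hsumle
      _ = (k : ℝ) * ((k : ℝ) - 1) * (n - t) := by push_cast; ring
  have hBadle : (Bad.card : ℝ) ≤ (k : ℝ) * ((n : ℝ) - t) / 2 := by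
    nlinarith [hk1, hkey']
  have hGoodEq : {w : Fin n | ∀ x ∈ R, G.Adj w x} = ↑Good := by
    ext w; simp [hGoodDef]
  rw [hGoodEq, Set.ncard_coe_finset]
  have : (Good.card : ℝ) = n - Bad.card := by
    have := congrArg (fun x : ℕ => (x : ℝ)) hsplit
    push_cast at this
    linarith
  linarith
end
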